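/- arXiv:1807.01549 — 2 statements merged into one kernel-verified Lean document; each statement's English description precedes it below -/
import Mathlib

section
/- Let X be a maximally homogeneous extremally disconnected space. If ζ and ρ are injective sequences in X with discrete range, then u(ζ) = u(ρ); that is, the set of free ultrafilters p for which a p-limit exists in X is the same for all injective discrete sequences on X. -/
open Set Filter Topology Function

/-- A free ultrafilter on ℕ: one containing no singleton. -/
def FreeUF (p : Ultrafilter ℕ) : Prop := ∀ n : ℕ, ({n} : Set ℕ) ∉ p

/-- `l` is the `p`-limit of the sequence `x`. -/
def PLim {X : Type*} [TopologicalSpace X] (p : Ultrafilter ℕ) (x : ℕ → X) (l : X) : Prop :=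
  Filter.Tendsto x (p : Filter ℕ) (nhds l)

/-- A βω-space: the closure of any countably infinite discrete subset with compact closure
is homeomorphic to βℕ. -/
def BetaOmegaSpace (X : Type*) [TopologicalSpace X] : Prop :=
  ∀ M : Set X, M.Countable → M.Infinite → DiscreteTopology M → IsCompact (closure M) →
    Nonempty (closure M ≃ₜ StoneCech ℕ)

/-- Keisler–Rudin (Rudin–Keisler) order on ultrafilters on ℕ. -/
def RKle (p q : Ultrafilter ℕ) : Prop := ∃ f : ℕ → ℕ, Ultrafilter.map f q = p

/-- A homogeneous space. -/
def Homogeneous (X : Type*) [TopologicalSpace X] : Prop :=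
  ∀ x y : X, ∃ h : X ≃ₜ X, h x = y

/-- A maximally homogeneous space: homogeneous and every self-homeomorphism of βX maps
(points of) X into X. -/
def MaximallyHomogeneous (X : Type*) [TopologicalSpace X] : Prop :=
  Homogeneous X ∧ ∀ (g : StoneCech X ≃ₜ StoneCech X) (x : X),
    ∃ y : X, g (stoneCechUnit x) = stoneCechUnit y




open Set Filter Topology Function

set_option linter.unusedSectionVars false

section Helpers

variable {X : Type*} [TopologicalSpace X] [T2Space X] [CompletelyRegularSpace X]

-- clopen neighbourhood base in ED completely regular spaces
lemma clopen_nbhd [ExtremallyDisconnected X] {x : X} {O : Set X} (hO : IsOpen O) (hx : x ∈ O) :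
    ∃ C : Set X, IsClopen C ∧ x ∈ C ∧ C ⊆ O := by
  obtain ⟨f, fc, fx, fO⟩ := CompletelyRegularSpace.completely_regular x Oᶜ
    (isClosed_compl_iff.mpr hO) (by simpa using hx)
  set W : Set X := f ⁻¹' {t : unitInterval | (t : ℝ) < 1 / 2} with hW
  have hWopen : IsOpen W := by
    have : {t : unitInterval | (t : ℝ) < 1 / 2} = (Subtype.val : unitInterval → ℝ) ⁻¹' Iio (1/2) := rfl
    rw [hW, this]
    exact (isOpen_Iio.preimage continuous_subtype_val).preimage fc
  have hxW : x ∈ W := by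
    simp only [hW, mem_preimage, mem_setOf_eq, fx]
    norm_num
  refine ⟨closure W, ⟨isClosed_closure, ExtremallyDisconnected.open_closure W hWopen⟩,
    subset_closure hxW, ?_⟩
  have h1 : closure W ⊆ f ⁻¹' {t : unitInterval | (t : ℝ) ≤ 1 / 2} := by
    apply closure_minimal
    · intro z hz
      simp only [mem_preimage, mem_setOf_eq] at hz ⊢
      exact hz.le
    · exact (isClosed_Iic.preimage continuous_subtype_val).preimage fc
  intro z hz
  by_contra hzO
  have := fO (by simpa using hzO)
  have h2 := h1 hz
  simp only [mem_preimage, mem_setOf_eq] at h2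
  rw [this] at h2
  norm_num at h2


-- pulling a limit back along the Stone-Cech unit
lemma tendsto_unit_down {σ : ℕ → X} {p : Filter ℕ} {y : X}
    (h : Tendsto (fun n => stoneCechUnit (σ n)) p (𝓝 (stoneCechUnit y))) :
    Tendsto σ p (𝓝 y) := by
  rw [tendsto_nhds]
  intro O hO hyO
  obtain ⟨f, fc, fy, fO⟩ := CompletelyRegularSpace.completely_regular y Oᶜ
    (isClosed_compl_iff.mpr hO) (by simpa using hyO)
  set F := stoneCechExtend fc with hF
  set M : Set (StoneCech X) := F ⁻¹' {t : unitInterval | (t : ℝ) < 1} with hM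
  have hMopen : IsOpen M := by
    have : {t : unitInterval | (t : ℝ) < 1} = (Subtype.val : unitInterval → ℝ) ⁻¹' Iio 1 := rfl
    rw [hM, this]
    exact ((isOpen_Iio.preimage continuous_subtype_val).preimage (continuous_stoneCechExtend fc))
  have hyM : stoneCechUnit y ∈ M := by
    have : F (stoneCechUnit y) = f y := congrFun (stoneCechExtend_extends fc) y
    simp only [hM, mem_preimage, mem_setOf_eq, this, fy]
    norm_num
  filter_upwards [h (hMopen.mem_nhds hyM)] with n hn
  have hfn : F (stoneCechUnit (σ n)) = f (σ n) := congrFun (stoneCechExtend_extends fc) (σ n)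
  simp only [hM, mem_preimage, mem_setOf_eq, hfn] at hn
  by_contra hnO
  have h1 := fO (by simpa using hnO)
  rw [h1] at hn
  norm_num at hn

-- the key extension lemma: a map continuous on an open subset of an extremally
-- disconnected space, with values in a compact Hausdorff space, extends continuously
-- to the closure of that set.
lemma exists_extension [ExtremallyDisconnected X]
    {K : Type*} [TopologicalSpace K] [CompactSpace K] [T2Space K] [Nonempty K]
    {V : Set X} (hV : IsOpen V) {ψ : X → K} (hψ : ContinuousOn ψ V) :
    ∃ Φ : X → K, ContinuousOn Φ (closure V) ∧ EqOn Φ ψ V := by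
  classical
  -- existence of limits along 𝓝[V] x for x in the closure
  have hlim : ∀ x ∈ closure V, ∃ c : K, Tendsto ψ (𝓝[V] x) (𝓝 c) := by
    intro x hx
    haveI hne : NeBot (𝓝[V] x) := mem_closure_iff_nhdsWithin_neBot.mp hx
    obtain ⟨c, hc⟩ := exists_clusterPt_of_compactSpace (map ψ (𝓝[V] x))
    refine ⟨c, ?_⟩
    by_contra hnot
    rw [(closed_nhds_basis c).tendsto_right_iff] at hnot
    push_neg at hnot
    obtain ⟨N, ⟨hNmem, hNclosed⟩, hNnot⟩ := hnot
    -- x is in the closure of V ∩ ψ ⁻¹' (interior N)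
    have hx1 : x ∈ closure (V ∩ ψ ⁻¹' interior N) := by
      rw [mem_closure_iff_frequently]
      have hfreq : ∃ᶠ z in 𝓝[V] x, ψ z ∈ interior N := by
        have hint : interior N ∈ 𝓝 c := interior_mem_nhds.mpr hNmem
        rw [Filter.frequently_iff]
        intro U hU
        have hmap : ψ '' U ∈ map ψ (𝓝[V] x) :=
          mem_map.mpr (mem_of_superset hU (subset_preimage_image ψ U))
        obtain ⟨k, hk1, hk2⟩ := clusterPt_iff_nonempty.mp hc hint hmap
        obtain ⟨z, hzU, hzk⟩ := hk2
        exact ⟨z, hzU, hzk ▸ hk1⟩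
      exact (frequently_nhdsWithin_iff.mp hfreq).mono fun z hz => ⟨hz.2, hz.1⟩
    -- x is in the closure of V ∩ ψ ⁻¹' Nᶜ
    have hx2 : x ∈ closure (V ∩ ψ ⁻¹' Nᶜ) := by
      rw [mem_closure_iff_frequently]
      have hfreq : ∃ᶠ z in 𝓝[V] x, ψ z ∈ Nᶜ := by
        exact hNnot
      exact (frequently_nhdsWithin_iff.mp hfreq).mono fun z hz => ⟨hz.2, hz.1⟩
    -- but those are disjoint open sets, contradiction with extremal disconnectedness
    have hO1 : IsOpen (V ∩ ψ ⁻¹' interior N) := hψ.isOpen_inter_preimage hV isOpen_interior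
    have hO2 : IsOpen (V ∩ ψ ⁻¹' Nᶜ) := hψ.isOpen_inter_preimage hV hNclosed.isOpen_compl
    have hdisj : Disjoint (V ∩ ψ ⁻¹' interior N) (V ∩ ψ ⁻¹' Nᶜ) := by
      rw [Set.disjoint_iff]
      rintro z ⟨⟨-, h1⟩, ⟨-, h2⟩⟩
      exact h2 (interior_subset h1)
    have := ExtremallyDisconnected.disjoint_closure_of_disjoint_isOpen hdisj hO1 hO2
    exact (Set.disjoint_iff.mp this) ⟨hx1, hx2⟩
  -- define the extension via limits
  set Φ : X → K := fun x => lim (map ψ (𝓝[V] x)) with hΦ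
  have hΦtendsto : ∀ x ∈ closure V, Tendsto ψ (𝓝[V] x) (𝓝 (Φ x)) := by
    intro x hx
    exact le_nhds_lim (hlim x hx)
  have heq : EqOn Φ ψ V := by
    intro x hx
    haveI hne : NeBot (𝓝[V] x) := mem_closure_iff_nhdsWithin_neBot.mp (subset_closure hx)
    exact tendsto_nhds_unique (hΦtendsto x (subset_closure hx)) (hψ x hx)
  refine ⟨Φ, ?_, heq⟩
  -- continuity of the extension on the closure
  intro x₀ hx₀
  rw [ContinuousWithinAt, (closed_nhds_basis (Φ x₀)).tendsto_right_iff]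
  rintro N ⟨hNmem, hNclosed⟩
  have hint : interior N ∈ 𝓝 (Φ x₀) := interior_mem_nhds.mpr hNmem
  have : ψ ⁻¹' interior N ∈ 𝓝[V] x₀ := hΦtendsto x₀ hx₀ hint
  rw [mem_nhdsWithin] at this
  obtain ⟨O, hOopen, hx₀O, hOsub⟩ := this
  rw [eventually_iff_exists_mem]
  refine ⟨closure V ∩ O, ?_, ?_⟩
  · exact inter_mem_nhdsWithin (closure V) (hOopen.mem_nhds hx₀O)
  · rintro z ⟨hzcl, hzO⟩
    have hzcl' : z ∈ closure (O ∩ V) := hOopen.inter_closure ⟨hzO, hzcl⟩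
    haveI : NeBot (𝓝[O ∩ V] z) := mem_closure_iff_nhdsWithin_neBot.mp hzcl'
    have ht : Tendsto ψ (𝓝[O ∩ V] z) (𝓝 (Φ z)) :=
      (hΦtendsto z hzcl).mono_left (nhdsWithin_mono z inter_subset_right)
    have hev : ∀ᶠ w in 𝓝[O ∩ V] z, ψ w ∈ interior N := by
      filter_upwards [self_mem_nhdsWithin] with w hw
      exact hOsub ⟨hw.1, hw.2⟩
    have : Φ z ∈ closure (interior N) := mem_closure_of_tendsto ht hev
    exact closure_minimal interior_subset hNclosed this

-- the swap lemma: two families of pairwise disjoint clopen "tubes", separated from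
-- one another and matched by homeomorphisms of X, give rise to a self-homeomorphism
-- of the Stone-Cech compactification interchanging the marked points.
lemma swap_lemma [ExtremallyDisconnected X]
    (A : Set ℕ) (α β : ℕ → X) (U T : ℕ → Set X) (h : ℕ → X ≃ₜ X)
    (hU : ∀ n ∈ A, IsClopen (U n)) (hαU : ∀ n ∈ A, α n ∈ U n)
    (hUd : ∀ m ∈ A, ∀ n ∈ A, m ≠ n → Disjoint (U m) (U n))
    (hTd : ∀ m ∈ A, ∀ n ∈ A, m ≠ n → Disjoint (T m) (T n))
    (hhU : ∀ n ∈ A, h n '' U n = T n) (hhα : ∀ n ∈ A, h n (α n) = β n)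
    (hsep : Disjoint (⋃ n ∈ A, U n) (⋃ n ∈ A, T n)) :
    ∃ g : StoneCech X ≃ₜ StoneCech X,
      ∀ n ∈ A, g (stoneCechUnit (α n)) = stoneCechUnit (β n) := by
  classical
  haveI : Nonempty X := ⟨α 0⟩
  haveI : Nonempty (StoneCech X) := ⟨stoneCechUnit (α 0)⟩
  set u : X → StoneCech X := stoneCechUnit with hu
  set V : Set X := ⋃ n ∈ A, U n with hV
  set W : Set X := ⋃ n ∈ A, T n with hWdef
  have hT : ∀ n ∈ A, IsClopen (T n) := by
    intro n hn
    rw [← hhU n hn, show ⇑(h n) '' U n = ⇑(h n).symm ⁻¹' U n from (h n).image_eq_preimage_symm _]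
    exact (hU n hn).preimage (h n).symm.continuous
  have hVopen : IsOpen V := isOpen_biUnion fun n hn => (hU n hn).isOpen
  have hWopen : IsOpen W := isOpen_biUnion fun n hn => (hT n hn).isOpen
  set G : Set X := closure V with hG
  set H : Set X := closure W with hH
  have hGopen : IsOpen G := ExtremallyDisconnected.open_closure V hVopen
  have hHopen : IsOpen H := ExtremallyDisconnected.open_closure W hWopen
  have hGH : Disjoint G H :=
    ExtremallyDisconnected.disjoint_closure_of_disjoint_isOpen hsep hVopen hWopen
  -- the piecewise maps
  set ψG : X → StoneCech X := fun x =>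
    if hx : ∃ n, n ∈ A ∧ x ∈ U n then u (h hx.choose x) else u x with hψG
  set ψH : X → StoneCech X := fun x =>
    if hx : ∃ n, n ∈ A ∧ x ∈ T n then u ((h hx.choose).symm x) else u x with hψH
  have ψG_eq : ∀ n ∈ A, ∀ x ∈ U n, ψG x = u (h n x) := by
    intro n hn x hx
    have hex : ∃ m, m ∈ A ∧ x ∈ U m := ⟨n, hn, hx⟩
    have hm := hex.choose_spec
    have : hex.choose = n := by
      by_contra hne
      exact Set.disjoint_iff.mp (hUd _ hm.1 n hn hne) ⟨hm.2, hx⟩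
    simp only [hψG, dif_pos hex, this]
  have ψH_eq : ∀ n ∈ A, ∀ x ∈ T n, ψH x = u ((h n).symm x) := by
    intro n hn x hx
    have hex : ∃ m, m ∈ A ∧ x ∈ T m := ⟨n, hn, hx⟩
    have hm := hex.choose_spec
    have : hex.choose = n := by
      by_contra hne
      exact Set.disjoint_iff.mp (hTd _ hm.1 n hn hne) ⟨hm.2, hx⟩
    simp only [hψH, dif_pos hex, this]
  have contψG : ContinuousOn ψG V := by
    intro x hx
    obtain ⟨n, hn, hxU⟩ : ∃ n ∈ A, x ∈ U n := by
      rw [hV] at hx; simpa using hx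
    apply ContinuousAt.continuousWithinAt
    apply ContinuousAt.congr ((continuous_stoneCechUnit.comp (h n).continuous).continuousAt)
    exact eventuallyEq_of_mem ((hU n hn).isOpen.mem_nhds hxU) fun z hz => (ψG_eq n hn z hz).symm
  have contψH : ContinuousOn ψH W := by
    intro x hx
    obtain ⟨n, hn, hxT⟩ : ∃ n ∈ A, x ∈ T n := by
      rw [hWdef] at hx; simpa using hx
    apply ContinuousAt.continuousWithinAt
    apply ContinuousAt.congr ((continuous_stoneCechUnit.comp (h n).symm.continuous).continuousAt)
    exact eventuallyEq_of_mem ((hT n hn).isOpen.mem_nhds hxT) fun z hz => (ψH_eq n hn z hz).symm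
  obtain ⟨ΦG, contΦG, eqG⟩ := exists_extension hVopen contψG
  obtain ⟨ΦH, contΦH, eqH⟩ := exists_extension hWopen contψH
  set Φ : X → StoneCech X := fun x => if x ∈ G then ΦG x else if x ∈ H then ΦH x else u x
    with hΦdef
  have hΦG : ∀ x ∈ G, Φ x = ΦG x := fun x hx => if_pos hx
  have hΦH : ∀ x ∈ H, Φ x = ΦH x := by
    intro x hx
    have : x ∉ G := fun hG' => Set.disjoint_iff.mp hGH ⟨hG', hx⟩
    simp only [hΦdef, if_neg this, if_pos hx]
  have hΦR : ∀ x, x ∉ G → x ∉ H → Φ x = u x := by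
    intro x h1 h2
    simp only [hΦdef, if_neg h1, if_neg h2]
  have contΦ : Continuous Φ := by
    rw [continuous_iff_continuousAt]
    intro x
    by_cases hxG : x ∈ G
    · exact (contΦG.continuousAt (hGopen.mem_nhds hxG)).congr
        (eventuallyEq_of_mem (hGopen.mem_nhds hxG) fun z hz => (hΦG z hz).symm)
    · by_cases hxH : x ∈ H
      · exact (contΦH.continuousAt (hHopen.mem_nhds hxH)).congr
          (eventuallyEq_of_mem (hHopen.mem_nhds hxH) fun z hz => (hΦH z hz).symm)
      · have hR : IsOpen (Gᶜ ∩ Hᶜ) :=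
          (isClosed_closure.isOpen_compl).inter (isClosed_closure.isOpen_compl)
        refine (continuous_stoneCechUnit.continuousAt).congr ?_
        refine eventuallyEq_of_mem (hR.mem_nhds ⟨hxG, hxH⟩) fun z hz => ?_
        exact (hΦR z hz.1 hz.2).symm
  -- the candidate map on the compactification
  set g0 : StoneCech X → StoneCech X := stoneCechExtend contΦ with hg0def
  have hg0u : ∀ x : X, g0 (u x) = Φ x := fun x => congrFun (stoneCechExtend_extends contΦ) x
  have hVG : V ⊆ G := subset_closure
  have hWH : W ⊆ H := subset_closure
  have cV : ∀ n ∈ A, ∀ x ∈ U n, g0 (u x) = u (h n x) := by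
    intro n hn x hx
    have hxV : x ∈ V := by rw [hV]; exact mem_biUnion hn hx
    rw [hg0u, hΦG x (hVG hxV), eqG hxV, ψG_eq n hn x hx]
  have cW : ∀ n ∈ A, ∀ y ∈ T n, g0 (u y) = u ((h n).symm y) := by
    intro n hn y hy
    have hyW : y ∈ W := by rw [hWdef]; exact mem_biUnion hn hy
    rw [hg0u, hΦH y (hWH hyW), eqH hyW, ψH_eq n hn y hy]
  have cR : ∀ x, x ∉ G → x ∉ H → g0 (u x) = u x := by
    intro x h1 h2
    rw [hg0u, hΦR x h1 h2]
  -- g0 is an involution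
  have hdense : Dense (u '' (V ∪ W ∪ (Gᶜ ∩ Hᶜ))) := by
    have hXd : Dense (V ∪ W ∪ (Gᶜ ∩ Hᶜ)) := by
      rw [dense_iff_closure_eq]
      apply eq_univ_of_univ_subset
      intro z _
      by_cases h1 : z ∈ G
      · exact closure_mono (subset_union_of_subset_left subset_union_left _) h1
      · by_cases h2 : z ∈ H
        · exact closure_mono (subset_union_of_subset_left subset_union_right _) h2
        · exact subset_closure (Or.inr ⟨h1, h2⟩)
    have h1 : closure (u '' (V ∪ W ∪ (Gᶜ ∩ Hᶜ))) ⊇ u '' closure (V ∪ W ∪ (Gᶜ ∩ Hᶜ)) :=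
      image_closure_subset_closure_image continuous_stoneCechUnit
    rw [dense_iff_closure_eq]
    apply eq_univ_of_univ_subset
    have h2 : range u ⊆ closure (u '' (V ∪ W ∪ (Gᶜ ∩ Hᶜ))) := by
      intro z hz
      obtain ⟨x, rfl⟩ := hz
      apply h1
      exact ⟨x, by rw [hXd.closure_eq]; trivial, rfl⟩
    calc univ = closure (range u) := (denseRange_stoneCechUnit.closure_eq).symm
    _ ⊆ closure (closure (u '' (V ∪ W ∪ (Gᶜ ∩ Hᶜ)))) := closure_mono h2
    _ = closure (u '' (V ∪ W ∪ (Gᶜ ∩ Hᶜ))) := closure_closure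
  have hcontg0 : Continuous g0 := by
    rw [hg0def]; exact continuous_stoneCechExtend contΦ
  have hinvol : ∀ z, g0 (g0 z) = z := by
    have : g0 ∘ g0 = id := by
      apply Continuous.ext_on hdense (hcontg0.comp hcontg0) continuous_id
      rintro z ⟨x, hx, rfl⟩
      rcases hx with (hxV | hxW) | ⟨h1, h2⟩
      · obtain ⟨n, hn, hxU⟩ : ∃ n ∈ A, x ∈ U n := by rw [hV] at hxV; simpa using hxV
        have hy : h n x ∈ T n := by rw [← hhU n hn]; exact mem_image_of_mem _ hxU
        simp only [Function.comp_apply, id_eq]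
        rw [cV n hn x hxU, cW n hn (h n x) hy, Homeomorph.symm_apply_apply]
      · obtain ⟨n, hn, hxT⟩ : ∃ n ∈ A, x ∈ T n := by rw [hWdef] at hxW; simpa using hxW
        have hy : (h n).symm x ∈ U n := by
          rw [← hhU n hn] at hxT
          obtain ⟨w, hw, rfl⟩ := hxT
          simpa using hw
        simp only [Function.comp_apply, id_eq]
        rw [cW n hn x hxT, cV n hn ((h n).symm x) hy, Homeomorph.apply_symm_apply]
      · simp only [Function.comp_apply, id_eq]
        rw [cR x h1 h2, cR x h1 h2]
    intro z
    exact congrFun this z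
  refine ⟨⟨⟨g0, g0, hinvol, hinvol⟩, hcontg0, hcontg0⟩, ?_⟩
  intro n hn
  show g0 (u (α n)) = u (β n)
  rw [cV n hn (α n) (hαU n hn), hhα n hn]

-- tubes around a discrete injective sequence, inside the complement of a clopen set
lemma tubes_of_discrete [ExtremallyDisconnected X] {ζ : ℕ → X} (hinj : Function.Injective ζ)
    (hd : DiscreteTopology ↥(Set.range ζ)) {E : Set X} (hE : IsClopen E) :
    ∃ U : ℕ → Set X,
      (∀ n, ζ n ∉ E → IsClopen (U n) ∧ ζ n ∈ U n ∧ U n ⊆ Eᶜ) ∧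
      (∀ m n, m ≠ n → Disjoint (U m) (U n)) := by
  classical
  -- basic discrete tubes
  have hopen : ∀ n : ℕ, ∃ O : Set X, IsOpen O ∧ O ∩ range ζ = {ζ n} := by
    intro n
    have : IsOpen ({(⟨ζ n, mem_range_self n⟩ : ↥(range ζ))} : Set ↥(range ζ)) :=
      isOpen_discrete _
    rw [isOpen_induced_iff] at this
    obtain ⟨O, hO, hOeq⟩ := this
    refine ⟨O, hO, ?_⟩
    ext x
    constructor
    · rintro ⟨hxO, hxr⟩
      have : (⟨x, hxr⟩ : ↥(range ζ)) ∈ (Subtype.val ⁻¹' O : Set ↥(range ζ)) := hxO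
      rw [hOeq] at this
      simpa using congrArg Subtype.val this
    · rintro rfl
      have : (⟨ζ n, mem_range_self n⟩ : ↥(range ζ)) ∈ (Subtype.val ⁻¹' O : Set ↥(range ζ)) := by
        rw [hOeq]; rfl
      exact ⟨this, mem_range_self n⟩
  choose O hOopen hOr using hopen
  -- refine to clopen tubes avoiding E
  have hclo : ∀ n : ℕ, ζ n ∉ E → ∃ C : Set X, IsClopen C ∧ ζ n ∈ C ∧ C ⊆ O n ∩ Eᶜ := by
    intro n hn
    apply clopen_nbhd ((hOopen n).inter hE.compl.isOpen)
    constructor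
    · have : ζ n ∈ O n ∩ range ζ := by rw [hOr n]; rfl
      exact this.1
    · exact hn
  set C : ℕ → Set X := fun n => if hn : ζ n ∉ E then (hclo n hn).choose else ∅ with hCdef
  have hCspec : ∀ n, ζ n ∉ E → IsClopen (C n) ∧ ζ n ∈ C n ∧ C n ⊆ O n ∩ Eᶜ := by
    intro n hn
    simp only [hCdef, dif_pos hn]
    exact (hclo n hn).choose_spec
  have hCclopen : ∀ n, IsClopen (C n) := by
    intro n
    by_cases hn : ζ n ∉ E
    · exact (hCspec n hn).1
    · simp only [hCdef, dif_neg hn]; exact isClopen_empty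
  have hCr : ∀ m n, ζ n ∈ C m → ζ n = ζ m := by
    intro m n hmem
    by_cases hm : ζ m ∉ E
    · have h1 := (hCspec m hm).2.2 hmem
      have : ζ n ∈ O m ∩ range ζ := ⟨h1.1, mem_range_self n⟩
      rw [hOr m] at this
      simpa using this
    · simp only [hCdef, dif_neg hm] at hmem
      exact absurd hmem (notMem_empty _)
  -- disjointify
  refine ⟨fun n => C n \ ⋃ k ∈ Finset.range n, C k, ?_, ?_⟩
  · intro n hn
    obtain ⟨h1, h2, h3⟩ := hCspec n hn
    refine ⟨?_, ?_, fun x hx => (h3 hx.1).2⟩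
    · exact h1.diff (isClopen_biUnion_finset fun k _ => hCclopen k)
    · refine ⟨h2, ?_⟩
      simp only [mem_iUnion, not_exists]
      intro k hk
      intro hmem
      have := hCr k n hmem
      exact (Finset.mem_range.mp hk).ne (hinj this).symm
  · intro m n hmn
    rcases hmn.lt_or_gt with hlt | hlt
    · rw [Set.disjoint_iff]
      rintro x ⟨⟨hx1, -⟩, ⟨-, hx2⟩⟩
      simp only [mem_iUnion, not_exists] at hx2
      exact hx2 m (Finset.mem_range.mpr hlt) hx1
    · rw [Set.disjoint_iff]
      rintro x ⟨⟨-, hx2⟩, ⟨hx1, -⟩⟩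
      simp only [mem_iUnion, not_exists] at hx2
      exact hx2 n (Finset.mem_range.mpr hlt) hx1

-- in a space with no isolated points, each nonempty clopen set contains two points
lemma two_points (hcr : ∀ z : X, ¬ IsOpen ({z} : Set X)) {C : Set X} (hC : IsClopen C)
    (hne : C.Nonempty) : ∃ a ∈ C, ∃ b ∈ C, a ≠ b := by
  obtain ⟨x, hx⟩ := hne
  by_contra hcon
  push_neg at hcon
  have : C = {x} := by
    apply Subset.antisymm
    · intro y hy
      exact mem_singleton_iff.mpr (hcon y hy x hx)
    · simpa using hx
  exact hcr x (this ▸ hC.isOpen)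

-- a sequence with pairwise disjoint clopen tubes inside a nonempty clopen set
lemma exists_tube_seq [ExtremallyDisconnected X] (hcr : ∀ z : X, ¬ IsOpen ({z} : Set X))
    {E : Set X} (hE : IsClopen E) (hEne : E.Nonempty) :
    ∃ (τ : ℕ → X) (T : ℕ → Set X),
      (∀ n, IsClopen (T n) ∧ τ n ∈ T n ∧ T n ⊆ E) ∧
      (∀ m n, m ≠ n → Disjoint (T m) (T n)) := by
  classical
  have step : ∀ R : Set X, IsClopen R → R.Nonempty →
      ∃ D : Set X, IsClopen D ∧ D.Nonempty ∧ D ⊆ R ∧ (R \ D).Nonempty := by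
    intro R hR hRne
    obtain ⟨a, ha, b, hb, hab⟩ := two_points hcr hR hRne
    obtain ⟨D, hD, haD, hDsub⟩ := clopen_nbhd (hR.isOpen.inter isClosed_singleton.isOpen_compl)
      (⟨ha, by simpa using hab⟩ : a ∈ R ∩ {b}ᶜ)
    refine ⟨D, hD, ⟨a, haD⟩, fun x hx => (hDsub hx).1, ⟨b, hb, fun hbD => (hDsub hbD).2 rfl⟩⟩
  choose D hD1 hD2 hD3 hD4 using step
  -- iterate
  set f : {S : Set X // IsClopen S ∧ S.Nonempty} → {S : Set X // IsClopen S ∧ S.Nonempty} :=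
    fun S => ⟨S.1 \ D S.1 S.2.1 S.2.2,
      (S.2.1.diff (hD1 S.1 S.2.1 S.2.2)), hD4 S.1 S.2.1 S.2.2⟩ with hfdef
  set R : ℕ → {S : Set X // IsClopen S ∧ S.Nonempty} := fun n => f^[n] ⟨E, hE, hEne⟩ with hRdef
  have hRsucc : ∀ n, R (n + 1) = f (R n) := by
    intro n
    rw [hRdef]
    exact Function.iterate_succ_apply' f n _
  set T : ℕ → Set X := fun n => D (R n).1 (R n).2.1 (R n).2.2 with hTdef
  have hTsub : ∀ n, T n ⊆ (R n).1 := fun n => hD3 _ _ _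
  have hTclopen : ∀ n, IsClopen (T n) := fun n => hD1 _ _ _
  have hTne : ∀ n, (T n).Nonempty := fun n => hD2 _ _ _
  have hRmono : ∀ n, (R (n + 1)).1 ⊆ (R n).1 := by
    intro n
    rw [hRsucc n]
    exact diff_subset
  have hRle : ∀ m k, (R (m + k)).1 ⊆ (R m).1 := by
    intro m k
    induction k with
    | zero => exact fun x hx => hx
    | succ j ih => exact (hRmono (m + j)).trans ih
  have hR0 : (R 0).1 = E := rfl
  have hTE : ∀ n, T n ⊆ E := by
    intro n
    have : (R n).1 ⊆ E := by
      have := hRle 0 n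
      rw [zero_add] at this; exact this
    exact (hTsub n).trans this
  have hTdisj : ∀ m n, m < n → Disjoint (T m) (T n) := by
    intro m n hmn
    have h1 : T n ⊆ (R (m + 1)).1 := by
      obtain ⟨k, rfl⟩ := Nat.exists_eq_add_of_le (Nat.succ_le_of_lt hmn)
      exact (hTsub _).trans (hRle (m+1) k)
    have h2 : (R (m + 1)).1 = (R m).1 \ T m := by
      rw [hRsucc m]
    rw [Set.disjoint_iff]
    rintro x ⟨hx1, hx2⟩
    have := h1 hx2
    rw [h2] at this
    exact this.2 hx1
  refine ⟨fun n => (hTne n).some, T, fun n => ⟨hTclopen n, (hTne n).some_mem, hTE n⟩, ?_⟩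
  intro m n hmn
  rcases hmn.lt_or_gt with h | h
  · exact hTdisj m n h
  · exact (hTdisj n m h).symm

end Helpers



lemma key_step {X : Type*} [TopologicalSpace X] [T2Space X] [CompletelyRegularSpace X]
    [ExtremallyDisconnected X] (hX : MaximallyHomogeneous X)
    {ζ ρ : ℕ → X} (hζinj : Function.Injective ζ) (hζd : DiscreteTopology ↥(Set.range ζ))
    (hρinj : Function.Injective ρ) (hρd : DiscreteTopology ↥(Set.range ρ))
    {p : Ultrafilter ℕ} (hp : FreeUF p) : (∃ l : X, PLim p ζ l) → ∃ l : X, PLim p ρ l := by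
  classical
  rintro ⟨x, hx'⟩
  have hx : Tendsto ζ (p : Filter ℕ) (𝓝 x) := hx'
  -- Case 1: there is an isolated point.  Then `x` is isolated and the limit cannot exist.
  by_cases hiso : ∃ z : X, IsOpen ({z} : Set X)
  · exfalso
    obtain ⟨z, hz⟩ := hiso
    obtain ⟨h, hh⟩ := hX.1 z x
    have hxopen : IsOpen ({x} : Set X) := by
      have himg : h '' {z} = {x} := by rw [Set.image_singleton, hh]
      rw [← himg]
      exact h.isOpenMap _ hz
    have hmem : ζ ⁻¹' {x} ∈ p := hx (hxopen.mem_nhds rfl)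
    obtain ⟨n₀, hn₀⟩ := Ultrafilter.nonempty_of_mem hmem
    have hsub : ζ ⁻¹' {x} ⊆ {n₀} := by
      intro m hm
      simp only [mem_preimage, mem_singleton_iff] at hm hn₀ ⊢
      exact hζinj (hm.trans hn₀.symm)
    exact hp n₀ (mem_of_superset hmem hsub)
  push_neg at hiso
  have hcr : ∀ z : X, ¬ IsOpen ({z} : Set X) := hiso
  -- Partition `X` into three nonempty clopen sets.
  obtain ⟨E, hEclopen, hEne, hEdisj, hEcover⟩ :
      ∃ E : Fin 3 → Set X, (∀ i, IsClopen (E i)) ∧ (∀ i, (E i).Nonempty) ∧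
        (∀ i j, i ≠ j → Disjoint (E i) (E j)) ∧ (⋃ i, E i) = univ := by
    obtain ⟨a, -, b, -, hab⟩ := two_points hcr isClopen_univ ⟨x, trivial⟩
    obtain ⟨D1, hD1, haD1, hD1sub⟩ := clopen_nbhd isClosed_singleton.isOpen_compl
      (show a ∈ ({b}ᶜ : Set X) by simpa using hab)
    have hbD1 : b ∉ D1 := fun hb => (hD1sub hb) rfl
    obtain ⟨y1, hy1, y2, hy2, hy12⟩ := two_points hcr hD1.compl ⟨b, hbD1⟩
    obtain ⟨D2, hD2, hyD2, hD2sub⟩ := clopen_nbhd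
      (hD1.compl.isOpen.inter isClosed_singleton.isOpen_compl)
      (⟨hy1, by simpa using hy12⟩ : y1 ∈ D1ᶜ ∩ {y2}ᶜ)
    have hD2c : D2 ⊆ D1ᶜ := fun w hw => (hD2sub hw).1
    have hy2D2 : y2 ∉ D2 := fun hw => (hD2sub hw).2 rfl
    refine ⟨![D1, D2, (D1 ∪ D2)ᶜ], ?_, ?_, ?_, ?_⟩
    · intro i
      fin_cases i
      · exact hD1
      · exact hD2
      · exact (hD1.union hD2).compl
    · intro i
      fin_cases i
      · exact ⟨a, haD1⟩
      · exact ⟨y1, hyD2⟩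
      · exact ⟨y2, by simp only [mem_compl_iff, mem_union]; exact fun hc => hc.elim hy2 hy2D2⟩
    · have d12 : Disjoint D1 D2 := by
        rw [Set.disjoint_iff]; rintro w ⟨hw1, hw2⟩; exact (hD2c hw2) hw1
      have d13 : Disjoint D1 (D1 ∪ D2)ᶜ := by
        rw [Set.disjoint_iff]; rintro w ⟨hw1, hw2⟩; exact hw2 (Or.inl hw1)
      have d23 : Disjoint D2 (D1 ∪ D2)ᶜ := by
        rw [Set.disjoint_iff]; rintro w ⟨hw1, hw2⟩; exact hw2 (Or.inr hw1)
      intro i j hij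
      fin_cases i <;> fin_cases j <;>
        first
          | exact absurd rfl hij
          | exact d12
          | exact d13
          | exact d23
          | exact d12.symm
          | exact d13.symm
          | exact d23.symm
    · apply eq_univ_of_univ_subset
      intro w _
      by_cases h1 : w ∈ D1
      · exact mem_iUnion.mpr ⟨0, h1⟩
      · by_cases h2 : w ∈ D2
        · exact mem_iUnion.mpr ⟨1, h2⟩
        · refine mem_iUnion.mpr ⟨2, ?_⟩
          simp only [Matrix.cons_val_two]
          exact fun hc => hc.elim h1 h2
  -- the ultrafilter picks one piece for each sequence; choose a third one
  have hpick : ∀ σ : ℕ → X, ∃ i, σ ⁻¹' (E i) ∈ p := by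
    intro σ
    by_contra hno
    push_neg at hno
    have h0 : (σ ⁻¹' (E 0))ᶜ ∈ p := Ultrafilter.compl_mem_iff_notMem.mpr (hno 0)
    have h1 : (σ ⁻¹' (E 1))ᶜ ∈ p := Ultrafilter.compl_mem_iff_notMem.mpr (hno 1)
    have h2 : (σ ⁻¹' (E 2))ᶜ ∈ p := Ultrafilter.compl_mem_iff_notMem.mpr (hno 2)
    have hint : ((σ ⁻¹' (E 0))ᶜ ∩ (σ ⁻¹' (E 1))ᶜ ∩ (σ ⁻¹' (E 2))ᶜ) ∈ p :=
      inter_mem (inter_mem h0 h1) h2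
    have hempty : ((σ ⁻¹' (E 0))ᶜ ∩ (σ ⁻¹' (E 1))ᶜ ∩ (σ ⁻¹' (E 2))ᶜ) = ∅ := by
      apply eq_empty_iff_forall_notMem.mpr
      rintro n ⟨⟨hn0, hn1⟩, hn2⟩
      have : σ n ∈ ⋃ i, E i := by rw [hEcover]; trivial
      obtain ⟨i, hi⟩ := mem_iUnion.mp this
      fin_cases i
      · exact hn0 hi
      · exact hn1 hi
      · exact hn2 hi
    rw [hempty] at hint
    exact Filter.empty_notMem (p : Filter ℕ) (Ultrafilter.mem_coe.mpr hint)
  obtain ⟨a, ha⟩ := hpick ζ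
  obtain ⟨b, hb⟩ := hpick ρ
  have hfin : ∀ a' b' : Fin 3, ∃ c : Fin 3, c ≠ a' ∧ c ≠ b' := by decide
  obtain ⟨c, hca, hcb⟩ := hfin a b
  have hA : ζ ⁻¹' (E c)ᶜ ∈ p := by
    refine mem_of_superset ha (preimage_mono ?_)
    exact (hEdisj a c (fun hh => hca hh.symm)).subset_compl_right
  have hB : ρ ⁻¹' (E c)ᶜ ∈ p := by
    refine mem_of_superset hb (preimage_mono ?_)
    exact (hEdisj b c (fun hh => hcb hh.symm)).subset_compl_right
  set A : Set ℕ := ζ ⁻¹' (E c)ᶜ with hAdef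
  set B : Set ℕ := ρ ⁻¹' (E c)ᶜ with hBdef
  -- auxiliary sequence with tubes inside E c
  obtain ⟨τ, T, hT, hTdisj⟩ := exists_tube_seq hcr (hEclopen c) (hEne c)
  -- tubes around ζ and ρ inside (E c)ᶜ
  obtain ⟨Uζ, hUζ, hUζdisj⟩ := tubes_of_discrete hζinj hζd (hEclopen c)
  obtain ⟨Uρ, hUρ, hUρdisj⟩ := tubes_of_discrete hρinj hρd (hEclopen c)
  -- homeomorphisms matching the marked points
  choose h1 hh1 using fun n => hX.1 (ζ n) (τ n)
  choose h2 hh2 using fun n => hX.1 (τ n) (ρ n)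
  have hmemA : ∀ n ∈ A, ζ n ∉ E c := fun n hn => hn
  have hmemB : ∀ n ∈ B, ρ n ∉ E c := fun n hn => hn
  -- first swap : ζ ↦ τ along A
  obtain ⟨g1, hg1⟩ := swap_lemma A ζ τ
      (fun n => Uζ n ∩ (h1 n) ⁻¹' (T n)) (fun n => h1 n '' (Uζ n ∩ (h1 n) ⁻¹' (T n))) h1
      (fun n hn => ((hUζ n (hmemA n hn)).1).inter ((hT n).1.preimage (h1 n).continuous))
      (fun n hn => ⟨(hUζ n (hmemA n hn)).2.1, by
        simp only [mem_preimage, hh1 n]; exact (hT n).2.1⟩)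
      (fun m hm n hn hmn => (hUζdisj m n hmn).mono inter_subset_left inter_subset_left)
      (fun m hm n hn hmn => by
        refine (hTdisj m n hmn).mono ?_ ?_ <;>
        · rintro w ⟨v, hv, rfl⟩
          simpa using hv.2)
      (fun n hn => rfl) (fun n hn => hh1 n)
      (by
        refine (disjoint_compl_left (a := E c)).mono ?_ ?_
        · intro w hw
          obtain ⟨n, hn, hw⟩ := mem_iUnion₂.mp hw
          exact (hUζ n (hmemA n hn)).2.2 hw.1
        · intro w hw
          obtain ⟨n, hn, hw⟩ := mem_iUnion₂.mp hw
          obtain ⟨v, hv, rfl⟩ := hw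
          have : (h1 n) v ∈ T n := by simpa using hv.2
          exact (hT n).2.2 this)
  -- transport the limit
  have hux : Tendsto (fun n => stoneCechUnit (ζ n)) (p : Filter ℕ) (𝓝 (stoneCechUnit x)) :=
    (continuous_stoneCechUnit.tendsto x).comp hx
  have hg1t : Tendsto (fun n => g1 (stoneCechUnit (ζ n))) (p : Filter ℕ)
      (𝓝 (g1 (stoneCechUnit x))) := (g1.continuous.tendsto _).comp hux
  have hτt : Tendsto (fun n => stoneCechUnit (τ n)) (p : Filter ℕ)
      (𝓝 (g1 (stoneCechUnit x))) := by
    apply hg1t.congr'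
    filter_upwards [hA] with n hn
    exact hg1 n hn
  obtain ⟨x₁, hx₁⟩ := hX.2 g1 x
  rw [hx₁] at hτt
  have hτ : Tendsto τ (p : Filter ℕ) (𝓝 x₁) := tendsto_unit_down hτt
  -- second swap : τ ↦ ρ along B
  obtain ⟨g2, hg2⟩ := swap_lemma B τ ρ
      (fun n => T n ∩ (h2 n) ⁻¹' (Uρ n)) (fun n => h2 n '' (T n ∩ (h2 n) ⁻¹' (Uρ n))) h2
      (fun n hn => ((hT n).1).inter ((hUρ n (hmemB n hn)).1.preimage (h2 n).continuous))
      (fun n hn => ⟨(hT n).2.1, by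
        simp only [mem_preimage, hh2 n]; exact (hUρ n (hmemB n hn)).2.1⟩)
      (fun m hm n hn hmn => (hTdisj m n hmn).mono inter_subset_left inter_subset_left)
      (fun m hm n hn hmn => by
        refine (hUρdisj m n hmn).mono ?_ ?_ <;>
        · rintro w ⟨v, hv, rfl⟩
          simpa using hv.2)
      (fun n hn => rfl) (fun n hn => hh2 n)
      (by
        refine (disjoint_compl_right (a := E c)).mono ?_ ?_
        · intro w hw
          obtain ⟨n, hn, hw⟩ := mem_iUnion₂.mp hw
          exact (hT n).2.2 hw.1
        · intro w hw
          obtain ⟨n, hn, hw⟩ := mem_iUnion₂.mp hw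
          obtain ⟨v, hv, rfl⟩ := hw
          have : (h2 n) v ∈ Uρ n := by simpa using hv.2
          exact (hUρ n (hmemB n hn)).2.2 this)
  have hux₁ : Tendsto (fun n => stoneCechUnit (τ n)) (p : Filter ℕ) (𝓝 (stoneCechUnit x₁)) :=
    (continuous_stoneCechUnit.tendsto x₁).comp hτ
  have hg2t : Tendsto (fun n => g2 (stoneCechUnit (τ n))) (p : Filter ℕ)
      (𝓝 (g2 (stoneCechUnit x₁))) := (g2.continuous.tendsto _).comp hux₁
  have hρt : Tendsto (fun n => stoneCechUnit (ρ n)) (p : Filter ℕ)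
      (𝓝 (g2 (stoneCechUnit x₁))) := by
    apply hg2t.congr'
    filter_upwards [hB] with n hn
    exact hg2 n hn
  obtain ⟨y, hy⟩ := hX.2 g2 x₁
  rw [hy] at hρt
  exact ⟨y, tendsto_unit_down hρt⟩

/-- In a maximally homogeneous extremally disconnected space, all discrete
exact sequences realize the same set of free ultrafilters as limits. -/
theorem stmt_16 {X : Type*} [TopologicalSpace X] [T2Space X] [CompletelyRegularSpace X]
    [ExtremallyDisconnected X] (hX : MaximallyHomogeneous X)
    (ζ ρ : ℕ → X) (hζinj : Function.Injective ζ) (hζd : DiscreteTopology ↥(Set.range ζ))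
    (hρinj : Function.Injective ρ) (hρd : DiscreteTopology ↥(Set.range ρ)) :
    {p : Ultrafilter ℕ | FreeUF p ∧ ∃ l : X, PLim p ζ l} =
      {p : Ultrafilter ℕ | FreeUF p ∧ ∃ l : X, PLim p ρ l} := by
  ext p
  simp only [mem_setOf_eq]
  constructor
  · rintro ⟨hp, hl⟩
    exact ⟨hp, key_step hX hζinj hζd hρinj hρd hp hl⟩
  · rintro ⟨hp, hl⟩
    exact ⟨hp, key_step hX hρinj hρd hζinj hζd hp hl⟩
end

section
/- Let X be a countably compact, maximally homogeneous, extremally disconnected space. Then X^ω is countably compact. -/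
open Set Filter Topology Function

/-- Countable compactness: every countable open cover has a finite subcover. -/
def CountablyCompact (X : Type*) [TopologicalSpace X] : Prop :=
  ∀ U : ℕ → Set X, (∀ n, IsOpen (U n)) → (⋃ n, U n) = Set.univ →
    ∃ t : Finset ℕ, (⋃ n ∈ t, U n) = Set.univ

set_option linter.unusedSectionVars false

namespace Stmt17

section Generic

variable {Z : Type*} [TopologicalSpace Z]

lemma disj_closure_left {U V : Set Z} (hV : IsOpen V) (h : Disjoint U V) :
    Disjoint (closure U) V := by
  rw [Set.disjoint_left]
  intro a ha haV
  rcases mem_closure_iff.1 ha V hV haV with ⟨b, hbV, hbU⟩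
  exact Set.disjoint_left.1 h hbU hbV

lemma ed_disj_closures (hED : ∀ W : Set Z, IsOpen W → IsOpen (closure W))
    {U V : Set Z} (hU : IsOpen U) (hV : IsOpen V) (h : Disjoint U V) :
    Disjoint (closure U) (closure V) := by
  have h1 : Disjoint (closure U) V := disj_closure_left hV h
  exact ((disj_closure_left (hED U hU) h1.symm).symm).mono_right subset_rfl

lemma clopen_basis [RegularSpace Z] (hED : ∀ W : Set Z, IsOpen W → IsOpen (closure W))
    {x : Z} {U : Set Z} (hU : IsOpen U) (hx : x ∈ U) :
    ∃ C : Set Z, IsClopen C ∧ x ∈ C ∧ C ⊆ U := by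
  obtain ⟨t, ht, htc, hts⟩ := exists_mem_nhds_isClosed_subset (hU.mem_nhds hx)
  refine ⟨closure (interior t), ⟨isClosed_closure, hED _ isOpen_interior⟩,
    subset_closure (mem_interior_iff_mem_nhds.2 ht), ?_⟩
  calc closure (interior t) ⊆ closure t := closure_mono interior_subset
    _ = t := htc.closure_eq
    _ ⊆ U := hts

lemma closure_open_inter_dense {U : Set Z} (hU : IsOpen U) {D : Set Z} (hD : Dense D) :
    closure (U ∩ D) = closure U := by
  refine subset_antisymm (closure_mono inter_subset_left) ?_
  have : U ⊆ closure (U ∩ D) := by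
    intro t htU
    rw [mem_closure_iff]
    intro o ho hto
    rcases hD.inter_open_nonempty (o ∩ U) (ho.inter hU) ⟨t, hto, htU⟩ with ⟨b, ⟨hbo, hbU⟩, hbD⟩
    exact ⟨b, hbo, hbU, hbD⟩
  rw [← closure_closure (s := U ∩ D)]
  exact closure_mono this

lemma extension_lemma [CompactSpace Z] [T2Space Z]
    (hED : ∀ W : Set Z, IsOpen W → IsOpen (closure W))
    {U : Set Z} (hUo : IsOpen U) {f : Z → Z}
    (hf : ∀ t ∈ U, ContinuousAt f t) :
    ∃ Φ : Z → Z, ContinuousOn Φ (closure U) ∧ EqOn Φ f U ∧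
      ∀ c : Set Z, IsClopen c → ∀ a ∈ closure U, a ∈ closure (U ∩ f ⁻¹' c) → Φ a ∈ c := by
  classical
  -- clopen separation of points
  have sep : ∀ z w : Z, z ≠ w → ∃ c : Set Z, IsClopen c ∧ z ∈ c ∧ w ∉ c := by
    intro z w hzw
    obtain ⟨Uz, Vw, hUo', hVo', hzU, hwV, hUV⟩ := t2_separation hzw
    refine ⟨closure Uz, ⟨isClosed_closure, hED _ hUo'⟩, subset_closure hzU, fun hw => ?_⟩
    exact Set.disjoint_left.1 (disj_closure_left hVo' hUV) hw hwV
  -- preimages of opens are open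
  have hpre : ∀ c : Set Z, IsOpen c → IsOpen (U ∩ f ⁻¹' c) := by
    intro c hc
    rw [isOpen_iff_mem_nhds]
    rintro t ⟨htU, htc⟩
    exact Filter.inter_mem (hUo.mem_nhds htU) ((hf t htU) (hc.mem_nhds htc))
  -- partition of the closure
  have cover : ∀ c : Set Z, IsClopen c → ∀ a ∈ closure U,
      a ∈ closure (U ∩ f ⁻¹' c) ∨ a ∈ closure (U ∩ f ⁻¹' cᶜ) := by
    intro c hc a ha
    have : U = (U ∩ f ⁻¹' c) ∪ (U ∩ f ⁻¹' cᶜ) := by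
      ext t; by_cases htc : f t ∈ c <;> simp [htc]
    rw [this, closure_union] at ha
    exact ha
  have dis : ∀ c : Set Z, IsClopen c →
      Disjoint (closure (U ∩ f ⁻¹' c)) (closure (U ∩ f ⁻¹' cᶜ)) := by
    intro c hc
    refine ed_disj_closures hED (hpre _ hc.2) (hpre _ hc.compl.2) ?_
    exact Set.disjoint_left.mpr (by rintro t ⟨-, h1⟩ ⟨-, h2⟩; exact h2 h1)
  -- the defining property
  set P : Z → Z → Prop :=
    fun a w => ∀ c : Set Z, IsClopen c → a ∈ closure (U ∩ f ⁻¹' c) → w ∈ c with hP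
  -- intersection property
  have inter_mem : ∀ (a : Z), a ∈ closure U → ∀ c₁ c₂ : Set Z, IsClopen c₁ → IsClopen c₂ →
      a ∈ closure (U ∩ f ⁻¹' c₁) → a ∈ closure (U ∩ f ⁻¹' c₂) →
      a ∈ closure (U ∩ f ⁻¹' (c₁ ∩ c₂)) := by
    intro a ha c₁ c₂ hc₁ hc₂ h1 h2
    by_contra hn
    have hsplit : closure (U ∩ f ⁻¹' c₁) ⊆
        closure (U ∩ f ⁻¹' (c₁ ∩ c₂)) ∪ closure (U ∩ f ⁻¹' (c₁ ∩ c₂ᶜ)) := by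
      rw [← closure_union]
      apply closure_mono
      rintro t ⟨htU, htc⟩
      by_cases h : f t ∈ c₂
      · exact Or.inl ⟨htU, htc, h⟩
      · exact Or.inr ⟨htU, htc, h⟩
    rcases hsplit h1 with h | h
    · exact hn h
    · have hsub : closure (U ∩ f ⁻¹' (c₁ ∩ c₂ᶜ)) ⊆ closure (U ∩ f ⁻¹' c₂ᶜ) :=
        closure_mono (by rintro t ⟨htU, -, htc⟩; exact ⟨htU, htc⟩)
      exact Set.disjoint_left.1 (dis c₂ hc₂) h2 (hsub h)
  -- existence of the limit point
  have hex : ∀ a ∈ closure U, ∃ w : Z, P a w := by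
    intro a ha
    set I := {c : Set Z // IsClopen c ∧ a ∈ closure (U ∩ f ⁻¹' c)} with hI
    have hne : Nonempty I := ⟨⟨Set.univ, isClopen_univ, by simpa using ha⟩⟩
    have hdir : Directed (· ⊇ ·) (fun c : I => c.1) := by
      rintro ⟨c₁, hc₁, h1⟩ ⟨c₂, hc₂, h2⟩
      exact ⟨⟨c₁ ∩ c₂, hc₁.inter hc₂, inter_mem a ha c₁ c₂ hc₁ hc₂ h1 h2⟩,
        inter_subset_left, inter_subset_right⟩
    have hnonempty : ∀ c : I, (c.1 : Set Z).Nonempty := by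
      rintro ⟨c, hc, hmem⟩
      rcases (closure_nonempty_iff.1 ⟨a, hmem⟩) with ⟨t, -, htc⟩
      exact ⟨f t, htc⟩
    obtain ⟨w, hw⟩ := IsCompact.nonempty_iInter_of_directed_nonempty_isCompact_isClosed
      (fun c : I => c.1) hdir hnonempty (fun c => c.2.1.1.isCompact)
      (fun c => c.2.1.1)
    refine ⟨w, fun c hc hmem => ?_⟩
    exact mem_iInter.1 hw ⟨c, hc, hmem⟩
  -- P a (f a) for a ∈ U
  have hPa : ∀ a ∈ U, P a (f a) := by
    intro a haU c hc hmem
    by_contra hfa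
    have haopen : a ∈ U ∩ f ⁻¹' cᶜ := ⟨haU, hfa⟩
    have := Set.disjoint_left.1
      (disj_closure_left (hpre _ hc.compl.2) (Set.disjoint_left.mpr
        (by rintro t ⟨-, h1⟩ ⟨-, h2⟩; exact h2 h1))) hmem haopen
    exact this
  -- uniqueness
  have huniq : ∀ a ∈ closure U, ∀ w w', P a w → P a w' → w = w' := by
    intro a ha w w' hw hw'
    by_contra hne
    obtain ⟨c, hc, hwc, hw'c⟩ := sep w w' hne
    rcases cover c hc a ha with h | h
    · exact hw'c (hw' c hc h)
    · exact (hw cᶜ hc.compl h) hwc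
  choose Φ0 hΦ0 using hex
  set Φ : Z → Z := fun a => if h : a ∈ closure U then Φ0 a h else a with hΦ
  have hΦval : ∀ a (h : a ∈ closure U), P a (Φ a) := by
    intro a h
    rw [hΦ]; simp only [dif_pos h]; exact hΦ0 a h
  have hEq : EqOn Φ f U := by
    intro a haU
    exact huniq a (subset_closure haU) _ _ (hΦval a (subset_closure haU)) (hPa a haU)
  refine ⟨Φ, ?_, hEq, fun c hc a ha hmem => hΦval a ha c hc hmem⟩
  -- continuity
  intro a ha
  rw [ContinuousWithinAt, Filter.tendsto_def]
  intro s hs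
  obtain ⟨O, hOsub, hOopen, hOmem⟩ := mem_nhds_iff.1 hs
  obtain ⟨c, hc, hmemc, hcsub⟩ := clopen_basis hED hOopen hOmem
  have hacl : a ∈ closure (U ∩ f ⁻¹' c) := by
    rcases cover c hc a ha with h | h
    · exact h
    · exact absurd (hΦval a ha cᶜ hc.compl h) (by simpa using hmemc)
  rw [mem_nhdsWithin]
  refine ⟨closure (U ∩ f ⁻¹' c), hED _ (hpre _ hc.2), hacl, ?_⟩
  rintro t ⟨htW, htcl⟩
  exact hOsub (hcsub (hΦval t htcl c hc htW))

end Generic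

section Beta

variable {X : Type*} [TopologicalSpace X] [T2Space X] [CompletelyRegularSpace X]

lemma unit_injective : Function.Injective (stoneCechUnit : X → StoneCech X) := by
  intro a b hab
  by_contra hne
  obtain ⟨f, hfc, hf0, hf1⟩ := CompletelyRegularSpace.completely_regular a {b}
    isClosed_singleton (by simpa using hne)
  have h2 : f a = f b := eq_if_stoneCechUnit_eq hfc hab
  rw [hf0, hf1 rfl] at h2
  have := congrArg Subtype.val h2
  norm_num at this

lemma unit_inducing : IsInducing (stoneCechUnit : X → StoneCech X) := by
  rw [isInducing_iff_nhds]
  intro x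
  refine le_antisymm (continuous_stoneCechUnit.tendsto x).le_comap ?_
  intro s hs
  obtain ⟨O, hOsub, hOopen, hxO⟩ := mem_nhds_iff.1 hs
  obtain ⟨f, hfc, hf0, hf1⟩ := CompletelyRegularSpace.completely_regular x Oᶜ
    hOopen.isClosed_compl (by simpa using hxO)
  set F := stoneCechExtend hfc with hF
  have hFu : ∀ z : X, F (stoneCechUnit z) = f z := fun z =>
    congrFun (stoneCechExtend_extends hfc) z
  refine mem_comap.2 ⟨F ⁻¹' ({1}ᶜ), ?_, ?_⟩
  · refine IsOpen.mem_nhds (isClosed_singleton.isOpen_compl.preimage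
      (continuous_stoneCechExtend hfc)) ?_
    simp only [mem_preimage, mem_compl_iff, mem_singleton_iff, hFu, hf0]
    intro h
    have := congrArg Subtype.val h
    norm_num at this
  · intro z hz
    simp only [mem_preimage, mem_compl_iff, mem_singleton_iff, hFu] at hz
    apply hOsub
    by_contra hzO
    exact hz (hf1 hzO)

/-- `hat C` is the canonical clopen copy of a clopen set `C ⊆ X` inside `βX`. -/
def hat (C : Set X) : Set (StoneCech X) := closure (stoneCechUnit '' C)

omit [T2Space X] [CompletelyRegularSpace X] in
lemma mem_hat {C : Set X} {x : X} (hx : x ∈ C) : stoneCechUnit x ∈ hat C :=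
  subset_closure (mem_image_of_mem _ hx)

omit [T2Space X] [CompletelyRegularSpace X] in
lemma hat_mono {C D : Set X} (h : C ⊆ D) : hat C ⊆ hat D :=
  closure_mono (image_mono h)

omit [T2Space X] [CompletelyRegularSpace X] in
lemma hat_indicator {C : Set X} (hC : IsClopen C) :
    ∃ F : StoneCech X → Bool, Continuous F ∧ hat C = F ⁻¹' {true} ∧
      hat Cᶜ = F ⁻¹' {false} := by
  have hcont : Continuous C.boolIndicator := (continuous_boolIndicator_iff_isClopen C).2 hC
  set F := stoneCechExtend hcont with hF
  have hFc : Continuous F := continuous_stoneCechExtend hcont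
  have hFu : ∀ x : X, F (stoneCechUnit x) = C.boolIndicator x := fun x =>
    congrFun (stoneCechExtend_extends hcont) x
  have h1 : hat C ⊆ F ⁻¹' {true} := by
    apply closure_minimal ?_ ((isClosed_discrete _).preimage hFc)
    rintro t ⟨x, hxC, rfl⟩
    simp [hFu, (Set.mem_iff_boolIndicator _ _).1 hxC]
  have h2 : hat Cᶜ ⊆ F ⁻¹' {false} := by
    apply closure_minimal ?_ ((isClosed_discrete _).preimage hFc)
    rintro t ⟨x, hxC, rfl⟩
    have : ¬ x ∈ C := hxC
    simp only [mem_preimage, mem_singleton_iff, hFu]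
    rw [← Bool.not_eq_true]
    exact fun h => this ((Set.mem_iff_boolIndicator _ _).2 h)
  have hcover : hat C ∪ hat Cᶜ = univ := by
    rw [hat, hat, ← closure_union, ← image_union, union_compl_self, image_univ]
    exact denseRange_stoneCechUnit.closure_eq
  refine ⟨F, hFc, ?_, ?_⟩
  · refine subset_antisymm h1 fun t ht => ?_
    rcases (by rw [hcover]; trivial : t ∈ hat C ∪ hat Cᶜ) with h | h
    · exact h
    · exact absurd (h2 h) (by simpa using ht)
  · refine subset_antisymm h2 fun t ht => ?_
    rcases (by rw [hcover]; trivial : t ∈ hat C ∪ hat Cᶜ) with h | h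
    · exact absurd (h1 h) (by simpa using ht)
    · exact h

omit [T2Space X] [CompletelyRegularSpace X] in
lemma hat_clopen {C : Set X} (hC : IsClopen C) : IsClopen (hat C) := by
  obtain ⟨F, hFc, h1, -⟩ := hat_indicator hC
  rw [h1]
  exact ⟨(isClosed_discrete _).preimage hFc, (isOpen_discrete _).preimage hFc⟩

omit [T2Space X] [CompletelyRegularSpace X] in
lemma hat_disj {C D : Set X} (hC : IsClopen C) (h : Disjoint C D) :
    Disjoint (hat C) (hat D) := by
  obtain ⟨F, hFc, h1, h2⟩ := hat_indicator hC
  have : hat D ⊆ F ⁻¹' {false} := le_trans (hat_mono (Set.disjoint_left.1 h.symm)) h2.le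
  rw [h1]
  refine Set.disjoint_left.2 fun t ht1 ht2 => ?_
  have := this ht2
  simp only [mem_preimage, mem_singleton_iff] at ht1 this
  rw [ht1] at this
  simp at this


omit [T2Space X] [CompletelyRegularSpace X] in
lemma closure_image_preimage {W : Set (StoneCech X)} (hW : IsOpen W) :
    closure W = closure (stoneCechUnit '' (stoneCechUnit ⁻¹' W)) := by
  rw [image_preimage_eq_inter_range]
  exact (Stmt17.closure_open_inter_dense hW denseRange_stoneCechUnit).symm

omit [T2Space X] [CompletelyRegularSpace X] in
lemma closure_image_eq_hat_closure {G : Set X} :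
    closure (stoneCechUnit '' G) = hat (closure G) := by
  refine subset_antisymm (hat_mono subset_closure) ?_
  apply closure_minimal ?_ isClosed_closure
  exact (image_closure_subset_closure_image continuous_stoneCechUnit)

omit [T2Space X] [CompletelyRegularSpace X] in
lemma ed_beta [ExtremallyDisconnected X] :
    ∀ W : Set (StoneCech X), IsOpen W → IsOpen (closure W) := by
  intro W hW
  rw [closure_image_preimage hW, closure_image_eq_hat_closure]
  exact (hat_clopen ⟨isClosed_closure,
    ExtremallyDisconnected.open_closure _ (hW.preimage continuous_stoneCechUnit)⟩).2

/-- Functorial extension of a self-homeomorphism of `X` to `βX`. -/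
noncomputable def betaH (h : X ≃ₜ X) : StoneCech X ≃ₜ StoneCech X where
  toFun := stoneCechExtend (continuous_stoneCechUnit.comp h.continuous)
  invFun := stoneCechExtend (continuous_stoneCechUnit.comp h.symm.continuous)
  left_inv := by
    intro t
    refine congrFun (stoneCech_hom_ext ((continuous_stoneCechExtend _).comp
      (continuous_stoneCechExtend _)) continuous_id (funext fun x => ?_)) t
    have e1 := congrFun (stoneCechExtend_extends (continuous_stoneCechUnit.comp h.continuous)) x
    have e2 := congrFun (stoneCechExtend_extends
      (continuous_stoneCechUnit.comp h.symm.continuous)) (h x)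
    simp only [Function.comp_apply] at e1 e2 ⊢
    rw [e1, e2, h.symm_apply_apply]
    rfl
  right_inv := by
    intro t
    refine congrFun (stoneCech_hom_ext ((continuous_stoneCechExtend _).comp
      (continuous_stoneCechExtend _)) continuous_id (funext fun x => ?_)) t
    have e1 := congrFun (stoneCechExtend_extends
      (continuous_stoneCechUnit.comp h.symm.continuous)) x
    have e2 := congrFun (stoneCechExtend_extends
      (continuous_stoneCechUnit.comp h.continuous)) (h.symm x)
    simp only [Function.comp_apply] at e1 e2 ⊢
    rw [e1, e2, h.apply_symm_apply]
    rfl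
  continuous_toFun := continuous_stoneCechExtend _
  continuous_invFun := continuous_stoneCechExtend _

omit [T2Space X] [CompletelyRegularSpace X] in
lemma betaH_unit (h : X ≃ₜ X) (x : X) :
    betaH h (stoneCechUnit x) = stoneCechUnit (h x) :=
  congrFun (stoneCechExtend_extends (continuous_stoneCechUnit.comp h.continuous)) x

end Beta

section XSec

variable {X : Type*} [TopologicalSpace X] [T2Space X] [CompletelyRegularSpace X]
  [ExtremallyDisconnected X]

lemma clopen_basis' {x : X} {U : Set X} (hU : IsOpen U) (hx : x ∈ U) :
    ∃ C : Set X, IsClopen C ∧ x ∈ C ∧ C ⊆ U :=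
  clopen_basis (fun W hW => ExtremallyDisconnected.open_closure W hW) hU hx

lemma split {S : Set X} (hS : S.Infinite) :
    ∃ (a : X) (K : Set X), a ∈ S ∧ IsClopen K ∧ a ∈ K ∧ (S \ K).Infinite := by
  obtain ⟨a, haS, b, hbS, hab⟩ := hS.nontrivial
  obtain ⟨Ua, Ub, hUa, hUb, haU, hbU, hdisj⟩ := t2_separation hab
  obtain ⟨C, hC, haC, hCsub⟩ := clopen_basis' hUa haU
  by_cases h : (S \ C).Infinite
  · exact ⟨a, C, haS, hC, haC, h⟩
  · refine ⟨b, Cᶜ, hbS, hC.compl, fun hbC => Set.disjoint_left.1 hdisj (hCsub hbC) hbU, ?_⟩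
    have h1 : S \ Cᶜ = S ∩ C := by ext t; simp [not_not]
    rw [h1]
    by_contra h2
    exact hS (((Set.not_infinite.1 h).union (Set.not_infinite.1 h2)).subset
      (fun t ht => by by_cases htC : t ∈ C; exacts [Or.inr ⟨ht, htC⟩, Or.inl ⟨ht, htC⟩]))

lemma exists_sdiscrete {S : Set X} (hS : S.Infinite) :
    ∃ (d : ℕ → X) (K : ℕ → Set X), (∀ n, d n ∈ S) ∧ (∀ n, IsClopen (K n)) ∧
      (∀ n, d n ∈ K n) ∧ (∀ m n, m ≠ n → Disjoint (K m) (K n)) ∧ Function.Injective d := by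
  classical
  let T := {A : Set X // A.Infinite}
  have hsplit : ∀ A : T, ∃ (a : X) (K : Set X), a ∈ A.1 ∧ IsClopen K ∧ a ∈ K ∧
      (A.1 \ K).Infinite := fun A => split A.2
  choose pt kp hpt hkp hmemk hres using hsplit
  let step : T → T := fun A => ⟨A.1 \ kp A, hres A⟩
  let R : ℕ → T := fun n => step^[n] ⟨S, hS⟩
  let d : ℕ → X := fun n => pt (R n)
  let K' : ℕ → Set X := fun n => kp (R n)
  have hRsucc : ∀ n, (R (n + 1)).1 = (R n).1 \ K' n := by
    intro n
    show (step^[n + 1] ⟨S, hS⟩).1 = _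
    rw [Function.iterate_succ_apply']
  have hmono : ∀ m n, m ≤ n → (R n).1 ⊆ (R m).1 := by
    intro m n h
    induction n with
    | zero => simp_all
    | succ k ih =>
      rcases Nat.lt_or_ge m (k+1) with h' | h'
      · exact le_trans (by rw [hRsucc k]; exact diff_subset) (ih (Nat.lt_succ_iff.1 h'))
      · have : m = k + 1 := le_antisymm h h'
        subst this; exact subset_rfl
  have hdisjR : ∀ m n, m < n → Disjoint ((R n).1) (K' m) := by
    intro m n h
    have h1 : (R n).1 ⊆ (R (m + 1)).1 := hmono _ _ h
    rw [hRsucc m] at h1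
    exact Set.disjoint_left.2 fun t ht htK => (h1 ht).2 htK
  have hdS : ∀ n, (R n).1 ⊆ S := fun n => hmono 0 n (Nat.zero_le n)
  let K : ℕ → Set X := fun n => K' n \ ⋃ j ∈ Finset.range n, K' j
  have hKclo : ∀ n, IsClopen (K n) := by
    intro n
    refine (hkp (R n)).diff ?_
    exact isClopen_biUnion_finset (fun j _ => hkp (R j))
  have hdK : ∀ n, d n ∈ K n := by
    intro n
    refine ⟨hmemk (R n), ?_⟩
    simp only [mem_iUnion, Finset.mem_range, not_exists]
    intro j hj hdj
    exact Set.disjoint_left.1 (hdisjR j n hj) (hpt (R n)) hdj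
  have hKsub : ∀ n, K n ⊆ K' n := fun n => diff_subset
  have hKdisj : ∀ m n, m ≠ n → Disjoint (K m) (K n) := by
    have key : ∀ m n, m < n → Disjoint (K m) (K n) := by
      intro m n h
      refine Set.disjoint_left.2 fun t htm htn => ?_
      exact htn.2 (mem_biUnion (Finset.mem_range.2 h) (htm.1))
    intro m n h
    rcases Ne.lt_or_gt h with h' | h'
    · exact key m n h'
    · exact (key n m h').symm
  refine ⟨d, K, fun n => hdS n (hpt (R n)), hKclo, hdK, hKdisj, ?_⟩
  intro m n hmn
  by_contra h
  rcases Ne.lt_or_gt h with h' | h'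
  · exact Set.disjoint_left.1 (hKdisj m n (Nat.ne_of_lt h')) (hdK m) (hmn ▸ hdK n)
  · exact Set.disjoint_left.1 (hKdisj n m (Nat.ne_of_lt h')) (hdK n) (hmn ▸ hdK m)

lemma exists_sdiscrete_set {S : Set X} (hS : S.Infinite) :
    ∃ (D : Set X) (Λ : X → Set X), D ⊆ S ∧ D.Infinite ∧
      (∀ v ∈ D, IsClopen (Λ v) ∧ v ∈ Λ v) ∧
      (∀ v ∈ D, ∀ w ∈ D, v ≠ w → Disjoint (Λ v) (Λ w)) := by
  classical
  obtain ⟨d, K, hdS, hKclo, hdK, hKdisj, hdinj⟩ := exists_sdiscrete hS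
  refine ⟨range d, fun v => if h : ∃ n, d n = v then K h.choose else ∅,
    range_subset_iff.2 hdS, infinite_range_of_injective hdinj, ?_, ?_⟩
  · rintro v ⟨m, rfl⟩
    have h : ∃ n, d n = d m := ⟨m, rfl⟩
    simp only [dif_pos h]
    refine ⟨hKclo _, ?_⟩
    have := hdK h.choose
    rwa [h.choose_spec] at this
  · rintro v ⟨m, rfl⟩ w ⟨m', rfl⟩ hne
    have h : ∃ n, d n = d m := ⟨m, rfl⟩
    have h' : ∃ n, d n = d m' := ⟨m', rfl⟩
    simp only [dif_pos h, dif_pos h']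
    refine hKdisj _ _ fun heq => hne ?_
    rw [← h.choose_spec, ← h'.choose_spec, heq]


lemma swap_lemma (hX : MaximallyHomogeneous X) (p : Ultrafilter ℕ)
    {e : ℕ → X} {xe : X} (he : Tendsto e (p : Filter ℕ) (𝓝 xe))
    {E : ℕ → Set X} (hEclo : ∀ k, IsClopen (E k)) (hEmem : ∀ k, e k ∈ E k)
    (hEdisj : ∀ m n, m ≠ n → Disjoint (E m) (E n))
    {y : ℕ → X} {B : Set ℕ} (hB : B ∈ p)
    {L : ℕ → Set X} (hLclo : ∀ k ∈ B, IsClopen (L k)) (hLmem : ∀ k ∈ B, y k ∈ L k)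
    (hLdisj : ∀ k ∈ B, ∀ j ∈ B, k ≠ j → Disjoint (L k) (L j))
    (hEL : ∀ k, ∀ j ∈ B, Disjoint (E k) (L j)) :
    ∃ l : X, Tendsto y (p : Filter ℕ) (𝓝 l) := by
  classical
  obtain ⟨hHom, hMax⟩ := hX
  -- homeomorphisms moving the anchor to y
  have hh0 : ∀ k, ∃ h : X ≃ₜ X, h (e k) = y k := fun k => hHom _ _
  choose h hh using hh0
  -- the small clopen pieces
  set M : ℕ → Set X := fun k => E k ∩ (h k) ⁻¹' (L k) with hM
  set N : ℕ → Set X := fun k => (h k).symm ⁻¹' (M k) with hN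
  have hMclo : ∀ k ∈ B, IsClopen (M k) :=
    fun k hk => (hEclo k).inter ((hLclo k hk).preimage (h k).continuous)
  have hNclo : ∀ k ∈ B, IsClopen (N k) :=
    fun k hk => (hMclo k hk).preimage (h k).symm.continuous
  have hMmem : ∀ k ∈ B, e k ∈ M k := by
    intro k hk
    exact ⟨hEmem k, by rw [mem_preimage, hh k]; exact hLmem k hk⟩
  have hNmem : ∀ k ∈ B, y k ∈ N k := by
    intro k hk
    rw [hN]
    simp only [mem_preimage]
    rw [← hh k, Homeomorph.symm_apply_apply]
    exact hMmem k hk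
  have hMsub : ∀ k, M k ⊆ E k := fun k => inter_subset_left
  have hNsub : ∀ k ∈ B, N k ⊆ L k := by
    intro k hk t ht
    rw [hN, mem_preimage, hM] at ht
    have := ht.2
    rw [mem_preimage, Homeomorph.apply_symm_apply] at this
    exact this
  have hMdisj : ∀ k ∈ B, ∀ j ∈ B, k ≠ j → Disjoint (M k) (M j) :=
    fun k _ j _ hkj => (hEdisj k j hkj).mono (hMsub k) (hMsub j)
  have hNdisj : ∀ k ∈ B, ∀ j ∈ B, k ≠ j → Disjoint (N k) (N j) :=
    fun k hk j hj hkj => (hLdisj k hk j hj hkj).mono (hNsub k hk) (hNsub j hj)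
  have hMNdisj : ∀ k, ∀ j ∈ B, Disjoint (M k) (N j) :=
    fun k j hj => (hEL k j hj).mono (hMsub k) (hNsub j hj)
  -- βX pieces
  set Mh : ℕ → Set (StoneCech X) := fun k => hat (M k) with hMh
  set Nh : ℕ → Set (StoneCech X) := fun k => hat (N k) with hNh
  have hMhclo : ∀ k ∈ B, IsClopen (Mh k) := fun k hk => hat_clopen (hMclo k hk)
  have hNhclo : ∀ k ∈ B, IsClopen (Nh k) := fun k hk => hat_clopen (hNclo k hk)
  have hMhdisj : ∀ k ∈ B, ∀ j ∈ B, k ≠ j → Disjoint (Mh k) (Mh j) :=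
    fun k hk j hj hkj => hat_disj (hMclo k hk) (hMdisj k hk j hj hkj)
  have hNhdisj : ∀ k ∈ B, ∀ j ∈ B, k ≠ j → Disjoint (Nh k) (Nh j) :=
    fun k hk j hj hkj => hat_disj (hNclo k hk) (hNdisj k hk j hj hkj)
  have hMNhdisj : ∀ k ∈ B, ∀ j ∈ B, Disjoint (Mh k) (Nh j) :=
    fun k hk j hj => hat_disj (hMclo k hk) (hMNdisj k j hj)
  set U : Set (StoneCech X) := ⋃ k ∈ B, Mh k with hU
  set V : Set (StoneCech X) := ⋃ k ∈ B, Nh k with hV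
  have hUo : IsOpen U := isOpen_biUnion fun k hk => (hMhclo k hk).2
  have hVo : IsOpen V := isOpen_biUnion fun k hk => (hNhclo k hk).2
  have hUV : Disjoint U V := by
    rw [Set.disjoint_left]
    intro t ht htV
    obtain ⟨k, hk, htk⟩ := mem_iUnion₂.1 ht
    obtain ⟨j, hj, htj⟩ := mem_iUnion₂.1 htV
    exact Set.disjoint_left.1 (hMNhdisj k hk j hj) htk htj
  set A : Set (StoneCech X) := closure U with hA
  set Bs : Set (StoneCech X) := closure V with hBs
  have hAclo : IsClopen A := ⟨isClosed_closure, ed_beta U hUo⟩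
  have hBclo : IsClopen Bs := ⟨isClosed_closure, ed_beta V hVo⟩
  have hABdisj : Disjoint A Bs := ed_disj_closures ed_beta hUo hVo hUV
  -- the glued maps
  set Ψ : ℕ → (StoneCech X ≃ₜ StoneCech X) := fun k => betaH (h k) with hΨ
  set f : StoneCech X → StoneCech X :=
    fun t => if hc : ∃ k, k ∈ B ∧ t ∈ Mh k then Ψ hc.choose t else t with hf
  set f' : StoneCech X → StoneCech X :=
    fun t => if hc : ∃ k, k ∈ B ∧ t ∈ Nh k then (Ψ hc.choose).symm t else t with hf'
  have hfM : ∀ k ∈ B, ∀ t ∈ Mh k, f t = Ψ k t := by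
    intro k hk t ht
    have hex : ∃ k', k' ∈ B ∧ t ∈ Mh k' := ⟨k, hk, ht⟩
    rw [hf]
    simp only [dif_pos hex]
    obtain ⟨hk', ht'⟩ := hex.choose_spec
    by_cases heq : hex.choose = k
    · rw [heq]
    · exact absurd ht (Set.disjoint_left.1 (hMhdisj _ hk' k hk heq) ht')
  have hf'N : ∀ k ∈ B, ∀ t ∈ Nh k, f' t = (Ψ k).symm t := by
    intro k hk t ht
    have hex : ∃ k', k' ∈ B ∧ t ∈ Nh k' := ⟨k, hk, ht⟩
    rw [hf']
    simp only [dif_pos hex]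
    obtain ⟨hk', ht'⟩ := hex.choose_spec
    by_cases heq : hex.choose = k
    · rw [heq]
    · exact absurd ht (Set.disjoint_left.1 (hNhdisj _ hk' k hk heq) ht')
  -- images of the pieces
  have himg1 : ∀ k, (h k) '' (M k) = N k := by
    intro k
    ext t
    rw [hN]
    simp only [mem_preimage, mem_image]
    constructor
    · rintro ⟨m, hm, rfl⟩; rwa [Homeomorph.symm_apply_apply]
    · intro hm; exact ⟨(h k).symm t, hm, (h k).apply_symm_apply t⟩
  have himg2 : ∀ k, (h k).symm '' (N k) = M k := by
    intro k
    ext t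
    rw [hN]
    simp only [mem_image, mem_preimage]
    constructor
    · rintro ⟨m, hm, rfl⟩; exact hm
    · intro hm
      exact ⟨(h k) t, by rwa [Homeomorph.symm_apply_apply], (h k).symm_apply_apply t⟩
  have hΨMN : ∀ k ∈ B, ∀ t ∈ Mh k, Ψ k t ∈ Nh k := by
    intro k hk t ht
    have him : Ψ k '' (stoneCechUnit '' M k) = stoneCechUnit '' N k := by
      rw [← image_comp]
      have : (Ψ k) ∘ stoneCechUnit = stoneCechUnit ∘ (h k) := funext fun z => betaH_unit (h k) z
      rw [this, image_comp, himg1 k]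
    have h1 : Ψ k t ∈ Ψ k '' (closure (stoneCechUnit '' M k)) := mem_image_of_mem _ ht
    have h2 : Ψ k '' (closure (stoneCechUnit '' M k)) ⊆ closure (Ψ k '' (stoneCechUnit '' M k)) :=
      image_closure_subset_closure_image (Ψ k).continuous
    rw [him] at h2
    exact h2 h1
  have hΨ'NM : ∀ k ∈ B, ∀ t ∈ Nh k, (Ψ k).symm t ∈ Mh k := by
    intro k hk t ht
    have him : (Ψ k).symm '' (stoneCechUnit '' N k) = stoneCechUnit '' M k := by
      rw [← image_comp]
      have hcomm : ((Ψ k).symm) ∘ stoneCechUnit = stoneCechUnit ∘ (h k).symm := by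
        funext z
        have := betaH_unit (h k) ((h k).symm z)
        rw [Homeomorph.apply_symm_apply] at this
        show (Ψ k).symm (stoneCechUnit z) = stoneCechUnit ((h k).symm z)
        rw [← this, Homeomorph.symm_apply_apply]
      rw [hcomm, image_comp, himg2 k]
    have h1 : (Ψ k).symm t ∈ (Ψ k).symm '' (closure (stoneCechUnit '' N k)) :=
      mem_image_of_mem _ ht
    have h2 : (Ψ k).symm '' (closure (stoneCechUnit '' N k)) ⊆
        closure ((Ψ k).symm '' (stoneCechUnit '' N k)) :=
      image_closure_subset_closure_image (Ψ k).symm.continuous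
    rw [him] at h2
    exact h2 h1
  have hfUV : ∀ t ∈ U, f t ∈ V := by
    intro t ht
    obtain ⟨k, hk, htk⟩ := mem_iUnion₂.1 ht
    rw [hfM k hk t htk]
    exact mem_iUnion₂.2 ⟨k, hk, hΨMN k hk t htk⟩
  have hf'VU : ∀ t ∈ V, f' t ∈ U := by
    intro t ht
    obtain ⟨k, hk, htk⟩ := mem_iUnion₂.1 ht
    rw [hf'N k hk t htk]
    exact mem_iUnion₂.2 ⟨k, hk, hΨ'NM k hk t htk⟩
  have hfcont : ∀ t ∈ U, ContinuousAt f t := by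
    intro t ht
    obtain ⟨k, hk, htk⟩ := mem_iUnion₂.1 ht
    refine (Ψ k).continuous.continuousAt.congr ?_
    exact eventually_of_mem ((hMhclo k hk).2.mem_nhds htk) (fun s hs => (hfM k hk s hs).symm)
  have hf'cont : ∀ t ∈ V, ContinuousAt f' t := by
    intro t ht
    obtain ⟨k, hk, htk⟩ := mem_iUnion₂.1 ht
    refine (Ψ k).symm.continuous.continuousAt.congr ?_
    exact eventually_of_mem ((hNhclo k hk).2.mem_nhds htk) (fun s hs => (hf'N k hk s hs).symm)
  -- extensions to the closures
  obtain ⟨Φ, hΦcont, hΦeq, hΦchar⟩ := extension_lemma ed_beta hUo hfcont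
  obtain ⟨Φ', hΦ'cont, hΦ'eq, hΦ'char⟩ := extension_lemma ed_beta hVo hf'cont
  have hΦAB : ∀ a ∈ A, Φ a ∈ Bs := by
    intro a ha
    refine hΦchar Bs hBclo a ha ?_
    have hsub : U ∩ f ⁻¹' Bs = U := by
      refine inter_eq_self_of_subset_left (fun t ht => subset_closure (hfUV t ht))
    rw [hsub]; exact ha
  have hΦ'BA : ∀ a ∈ Bs, Φ' a ∈ A := by
    intro a ha
    refine hΦ'char A hAclo a ha ?_
    have hsub : V ∩ f' ⁻¹' A = V := by
      refine inter_eq_self_of_subset_left (fun t ht => subset_closure (hf'VU t ht))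
    rw [hsub]; exact ha
  -- the compositions are the identity
  have hUeq : ∀ t ∈ U, Φ' (Φ t) = t := by
    intro t ht
    obtain ⟨k, hk, htk⟩ := mem_iUnion₂.1 ht
    have e1 : Φ t = Ψ k t := (hΦeq ht).trans (hfM k hk t htk)
    have e2 : Ψ k t ∈ Nh k := hΨMN k hk t htk
    have e2' : Ψ k t ∈ V := mem_iUnion₂.2 ⟨k, hk, e2⟩
    rw [e1, hΦ'eq e2', hf'N k hk _ e2, Homeomorph.symm_apply_apply]
  have hVeq : ∀ t ∈ V, Φ (Φ' t) = t := by
    intro t ht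
    obtain ⟨k, hk, htk⟩ := mem_iUnion₂.1 ht
    have e1 : Φ' t = (Ψ k).symm t := (hΦ'eq ht).trans (hf'N k hk t htk)
    have e2 : (Ψ k).symm t ∈ Mh k := hΨ'NM k hk t htk
    have e2' : (Ψ k).symm t ∈ U := mem_iUnion₂.2 ⟨k, hk, e2⟩
    rw [e1, hΦeq e2', hfM k hk _ e2, Homeomorph.apply_symm_apply]
  have hcomp : ∀ a ∈ A, Φ' (Φ a) = a := by
    intro a ha
    haveI : (𝓝[U] a).NeBot := mem_closure_iff_nhdsWithin_neBot.1 ha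
    have h1 : Tendsto Φ (𝓝[U] a) (𝓝 (Φ a)) :=
      (hΦcont a ha).mono_left (nhdsWithin_mono a subset_closure)
    have h1' : Tendsto Φ (𝓝[U] a) (𝓝[Bs] (Φ a)) := by
      rw [tendsto_nhdsWithin_iff]
      refine ⟨h1, ?_⟩
      filter_upwards [self_mem_nhdsWithin] with t ht
      rw [hΦeq ht]
      exact subset_closure (hfUV t ht)
    have h2 : Tendsto Φ' (𝓝[Bs] (Φ a)) (𝓝 (Φ' (Φ a))) := hΦ'cont _ (hΦAB a ha)
    have h3 : Tendsto (Φ' ∘ Φ) (𝓝[U] a) (𝓝 (Φ' (Φ a))) := h2.comp h1'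
    have h4 : Tendsto (Φ' ∘ Φ) (𝓝[U] a) (𝓝 a) := by
      refine Tendsto.congr' ?_ (tendsto_id'.2 nhdsWithin_le_nhds)
      filter_upwards [self_mem_nhdsWithin] with t ht
      exact (hUeq t ht).symm
    exact tendsto_nhds_unique h3 h4
  have hcomp' : ∀ a ∈ Bs, Φ (Φ' a) = a := by
    intro a ha
    haveI : (𝓝[V] a).NeBot := mem_closure_iff_nhdsWithin_neBot.1 ha
    have h1 : Tendsto Φ' (𝓝[V] a) (𝓝 (Φ' a)) :=
      (hΦ'cont a ha).mono_left (nhdsWithin_mono a subset_closure)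
    have h1' : Tendsto Φ' (𝓝[V] a) (𝓝[A] (Φ' a)) := by
      rw [tendsto_nhdsWithin_iff]
      refine ⟨h1, ?_⟩
      filter_upwards [self_mem_nhdsWithin] with t ht
      rw [hΦ'eq ht]
      exact subset_closure (hf'VU t ht)
    have h2 : Tendsto Φ (𝓝[A] (Φ' a)) (𝓝 (Φ (Φ' a))) := hΦcont _ (hΦ'BA a ha)
    have h3 : Tendsto (Φ ∘ Φ') (𝓝[V] a) (𝓝 (Φ (Φ' a))) := h2.comp h1'
    have h4 : Tendsto (Φ ∘ Φ') (𝓝[V] a) (𝓝 a) := by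
      refine Tendsto.congr' ?_ (tendsto_id'.2 nhdsWithin_le_nhds)
      filter_upwards [self_mem_nhdsWithin] with t ht
      exact (hVeq t ht).symm
    exact tendsto_nhds_unique h3 h4
  -- the global involution
  set G : StoneCech X → StoneCech X :=
    fun t => if t ∈ A then Φ t else if t ∈ Bs then Φ' t else t with hG
  have hGA : ∀ t ∈ A, G t = Φ t := fun t ht => by rw [hG]; simp only [if_pos ht]
  have hGB : ∀ t ∈ Bs, G t = Φ' t := by
    intro t ht
    have htA : t ∉ A := fun h => Set.disjoint_left.1 hABdisj h ht
    rw [hG]; simp only [if_neg htA, if_pos ht]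
  have hGelse : ∀ t, t ∉ A → t ∉ Bs → G t = t := by
    intro t h1 h2
    rw [hG]; simp only [if_neg h1, if_neg h2]
  have hGinv : ∀ t, G (G t) = t := by
    intro t
    by_cases htA : t ∈ A
    · rw [hGA t htA, hGB _ (hΦAB t htA), hcomp t htA]
    · by_cases htB : t ∈ Bs
      · rw [hGB t htB, hGA _ (hΦ'BA t htB), hcomp' t htB]
      · rw [hGelse t htA htB, hGelse t htA htB]
  have hGcont : Continuous G := by
    rw [continuous_iff_continuousAt]
    intro t
    by_cases htA : t ∈ A
    · refine ((hΦcont t htA).continuousAt (hAclo.2.mem_nhds htA)).congr ?_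
      exact eventually_of_mem (hAclo.2.mem_nhds htA) (fun s hs => (hGA s hs).symm)
    · by_cases htB : t ∈ Bs
      · refine ((hΦ'cont t htB).continuousAt (hBclo.2.mem_nhds htB)).congr ?_
        exact eventually_of_mem (hBclo.2.mem_nhds htB) (fun s hs => (hGB s hs).symm)
      · have hW : IsOpen ((A ∪ Bs)ᶜ) := (hAclo.1.union hBclo.1).isOpen_compl
        refine continuousAt_id.congr ?_
        refine eventually_of_mem (hW.mem_nhds ?_) (fun s hs => ?_)
        · simp [htA, htB]
        · simp only [mem_compl_iff, mem_union, not_or] at hs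
          exact (hGelse s hs.1 hs.2).symm
  set GH : StoneCech X ≃ₜ StoneCech X :=
    ⟨⟨G, G, hGinv, hGinv⟩, hGcont, hGcont⟩ with hGH
  -- the anchor point lies in A
  have hue : Tendsto (fun k => stoneCechUnit (e k)) (p : Filter ℕ) (𝓝 (stoneCechUnit xe)) :=
    (continuous_stoneCechUnit.tendsto xe).comp he
  have hxeA : stoneCechUnit xe ∈ A := by
    rw [hA, mem_closure_iff]
    intro o ho hmem
    have hev : ∀ᶠ k in (p : Filter ℕ), stoneCechUnit (e k) ∈ o := hue (ho.mem_nhds hmem)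
    obtain ⟨k, hko, hkB⟩ := (Filter.nonempty_of_mem (Filter.inter_mem hev hB) : Set.Nonempty _)
    exact ⟨stoneCechUnit (e k), hko, mem_iUnion₂.2 ⟨k, hkB, mem_hat (hMmem k hkB)⟩⟩
  -- conclude via maximal homogeneity
  have hGe : ∀ᶠ k in (p : Filter ℕ), G (stoneCechUnit (e k)) = stoneCechUnit (y k) := by
    filter_upwards [hB] with k hk
    have h1 : stoneCechUnit (e k) ∈ Mh k := mem_hat (hMmem k hk)
    have h1' : stoneCechUnit (e k) ∈ U := mem_iUnion₂.2 ⟨k, hk, h1⟩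
    rw [hGA _ (subset_closure h1'), hΦeq h1', hfM k hk _ h1]
    show betaH (h k) (stoneCechUnit (e k)) = _
    rw [betaH_unit, hh k]
  have hGtend : Tendsto (fun k => stoneCechUnit (y k)) (p : Filter ℕ)
      (𝓝 (G (stoneCechUnit xe))) :=
    Tendsto.congr' hGe ((hGcont.tendsto _).comp hue)
  obtain ⟨l, hl⟩ := hMax GH xe
  have hl' : G (stoneCechUnit xe) = stoneCechUnit l := hl
  rw [hl'] at hGtend
  exact ⟨l, unit_inducing.tendsto_nhds_iff.2 hGtend⟩


lemma range_not_closed (hcc : CountablyCompact X)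
    {d : ℕ → X} {K : ℕ → Set X} (hKclo : ∀ n, IsClopen (K n)) (hdK : ∀ n, d n ∈ K n)
    (hKdisj : ∀ m n, m ≠ n → Disjoint (K m) (K n)) :
    ∃ x : X, x ∉ range d ∧ x ∈ closure (range d) := by
  by_contra hcon
  push_neg at hcon
  have hclosed : IsClosed (range d) := by
    rw [← closure_subset_iff_isClosed]
    intro t ht
    by_contra htr
    exact (hcon t htr) ht
  set U : ℕ → Set X := fun n => if n = 0 then (range d)ᶜ ∪ K 0 else K n with hUdef
  have hUopen : ∀ n, IsOpen (U n) := by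
    intro n
    rw [hUdef]
    by_cases hn : n = 0
    · simp only [if_pos hn]
      exact hclosed.isOpen_compl.union (hKclo 0).2
    · simp only [if_neg hn]
      exact (hKclo n).2
  have hUcover : (⋃ n, U n) = Set.univ := by
    rw [eq_univ_iff_forall]
    intro t
    by_cases ht : t ∈ range d
    · obtain ⟨m, rfl⟩ := ht
      by_cases hm : m = 0
      · subst hm
        exact mem_iUnion.2 ⟨0, by rw [hUdef]; simp only [if_pos rfl]; exact Or.inr (hdK 0)⟩
      · exact mem_iUnion.2 ⟨m, by rw [hUdef]; simp only [if_neg hm]; exact hdK m⟩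
    · exact mem_iUnion.2 ⟨0, by rw [hUdef]; simp only [if_pos rfl]; exact Or.inl ht⟩
  obtain ⟨t, htcov⟩ := hcc U hUopen hUcover
  set m : ℕ := (t.sup id) + 1 with hm
  have hmge : ∀ j ∈ t, j < m := by
    intro j hj
    exact Nat.lt_succ_of_le (Finset.le_sup (f := id) hj)
  have : d m ∈ ⋃ j ∈ t, U j := by rw [htcov]; trivial
  obtain ⟨j, hjt, hdm⟩ := mem_iUnion₂.1 this
  have hjm : j ≠ m := Nat.ne_of_lt (hmge j hjt)
  rw [hUdef] at hdm
  by_cases hj0 : j = 0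
  · subst hj0
    simp only [if_pos rfl] at hdm
    rcases hdm with hdm | hdm
    · exact hdm (mem_range_self m)
    · have hm0 : m ≠ 0 := by omega
      exact Set.disjoint_left.1 (hKdisj m 0 hm0) (hdK m) hdm
  · simp only [if_neg hj0] at hdm
    exact Set.disjoint_left.1 (hKdisj m j (fun h => hjm h.symm)) (hdK m) hdm


lemma build_p {d : ℕ → X} {K : ℕ → Set X} (hKclo : ∀ n, IsClopen (K n))
    (hdK : ∀ n, d n ∈ K n) (hKdisj : ∀ m n, m ≠ n → Disjoint (K m) (K n))
    {x : X} (hxr : x ∉ range d) (hxcl : x ∈ closure (range d)) :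
    ∃ p : Ultrafilter ℕ, (∀ s : Set ℕ, s.Finite → s ∉ p) ∧
      Tendsto d (p : Filter ℕ) (𝓝 x) := by
  classical
  have hED : ∀ W : Set X, IsOpen W → IsOpen (closure W) :=
    fun W hW => ExtremallyDisconnected.open_closure W hW
  -- disjoint images have disjoint closures
  have key : ∀ A B₂ : Set ℕ, Disjoint A B₂ → x ∈ closure (d '' A) → x ∉ closure (d '' B₂) := by
    intro A B₂ hAB hxA hxB
    have h1 : d '' A ⊆ ⋃ n ∈ A, K n := by
      rintro t ⟨n, hn, rfl⟩; exact mem_iUnion₂.2 ⟨n, hn, hdK n⟩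
    have h2 : d '' B₂ ⊆ ⋃ n ∈ B₂, K n := by
      rintro t ⟨n, hn, rfl⟩; exact mem_iUnion₂.2 ⟨n, hn, hdK n⟩
    have hdisj : Disjoint (⋃ n ∈ A, K n) (⋃ n ∈ B₂, K n) := by
      rw [Set.disjoint_left]
      intro s hs hs'
      obtain ⟨n, hn, hsn⟩ := mem_iUnion₂.1 hs
      obtain ⟨n', hn', hsn'⟩ := mem_iUnion₂.1 hs'
      have : n ≠ n' := fun h => Set.disjoint_left.1 hAB hn (h ▸ hn')
      exact Set.disjoint_left.1 (hKdisj n n' this) hsn hsn'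
    have := ed_disj_closures hED (isOpen_biUnion fun n _ => (hKclo n).2)
      (isOpen_biUnion fun n _ => (hKclo n).2) hdisj
    exact Set.disjoint_left.1 this ((closure_mono h1) hxA) ((closure_mono h2) hxB)
  set F : Filter ℕ :=
    { sets := {A | x ∈ closure (d '' A)}
      univ_sets := by simpa [image_univ] using hxcl
      sets_of_superset := by
        intro A B₂ hA hAB
        exact closure_mono (image_mono hAB) hA
      inter_sets := by
        intro A B₂ hA hB
        by_contra hn
        have hsplit : x ∈ closure (d '' (A ∩ B₂)) ∨ x ∈ closure (d '' (A \ B₂)) := by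
          have : d '' A ⊆ d '' (A ∩ B₂) ∪ d '' (A \ B₂) := by
            rintro s ⟨n, hnA, rfl⟩
            by_cases hnB : n ∈ B₂
            · exact Or.inl (mem_image_of_mem _ ⟨hnA, hnB⟩)
            · exact Or.inr (mem_image_of_mem _ ⟨hnA, hnB⟩)
          have := (closure_mono this) hA
          rwa [closure_union, mem_union] at this
        rcases hsplit with h | h
        · exact hn h
        · exact key (A \ B₂) B₂ (Set.disjoint_left.2 fun n hn₁ hn₂ => hn₁.2 hn₂) h hB } with hF
  have hmemF : ∀ A : Set ℕ, A ∈ F ↔ x ∈ closure (d '' A) := fun A => Iff.rfl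
  have hultra : ∀ s : Set ℕ, sᶜ ∉ F ↔ s ∈ F := by
    intro s
    constructor
    · intro hns
      rw [hmemF] at hns ⊢
      have hcover : x ∈ closure (d '' s) ∪ closure (d '' sᶜ) := by
        rw [← closure_union, ← image_union, union_compl_self, image_univ]
        exact hxcl
      rcases hcover with h | h
      · exact h
      · exact absurd h hns
    · intro hs hsc
      rw [hmemF] at hs hsc
      exact key s sᶜ disjoint_compl_right hs hsc
  refine ⟨Ultrafilter.ofComplNotMemIff F hultra, ?_, ?_⟩
  · intro s hs hsF
    have : x ∈ closure (d '' s) := hsF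
    rw [((hs.image d).isClosed).closure_eq] at this
    obtain ⟨n, -, rfl⟩ := this
    exact hxr (mem_range_self n)
  · intro O hO
    obtain ⟨O', hO'sub, hO'open, hxO'⟩ := mem_nhds_iff.1 hO
    obtain ⟨C, hCclo, hxC, hCsub⟩ := clopen_basis' hO'open hxO'
    have hCF : {n | d n ∈ C} ∈ F := by
      rw [hmemF]
      by_contra hnC
      have h2 : x ∈ closure (d '' {n | d n ∈ C}ᶜ) := by
        have := (hultra {n | d n ∈ C}).mpr
        -- use the cover dichotomy directly
        have hcover : x ∈ closure (d '' {n | d n ∈ C}) ∪ closure (d '' {n | d n ∈ C}ᶜ) := by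
          rw [← closure_union, ← image_union, union_compl_self, image_univ]
          exact hxcl
        rcases hcover with h | h
        · exact absurd h hnC
        · exact h
      have hsub : d '' {n | d n ∈ C}ᶜ ⊆ Cᶜ := by
        rintro s ⟨n, hn, rfl⟩
        exact hn
      have := (closure_mono hsub) h2
      rw [hCclo.compl.isClosed.closure_eq] at this
      exact this hxC
    exact mem_of_superset hCF (fun n hn => hO'sub (hCsub hn))


lemma main_p_limit (hX : MaximallyHomogeneous X) (hcc : CountablyCompact X)
    (hinf : Infinite X) :
    ∃ p : Ultrafilter ℕ, (∀ s : Set ℕ, s.Finite → s ∉ p) ∧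
      ∀ (y : ℕ → X) (B : Set ℕ), B ∈ p → Set.InjOn y B →
        (∃ Λ : X → Set X, (∀ v ∈ y '' B, IsClopen (Λ v) ∧ v ∈ Λ v) ∧
          (∀ v ∈ y '' B, ∀ w ∈ y '' B, v ≠ w → Disjoint (Λ v) (Λ w))) →
        ∃ l : X, Tendsto y (p : Filter ℕ) (𝓝 l) := by
  classical
  obtain ⟨d', K', -, hKclo', hdK', hKdisj', hdinj'⟩ :=
    exists_sdiscrete (Set.infinite_univ (α := X))
  set e : ℕ → X := fun n => d' (2 * n) with he
  set E : ℕ → Set X := fun n => K' (2 * n) with hE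
  set w : ℕ → X := fun n => d' (2 * n + 1) with hw
  set Ew : ℕ → Set X := fun n => K' (2 * n + 1) with hEw
  have hEclo : ∀ k, IsClopen (E k) := fun k => hKclo' _
  have hEwclo : ∀ k, IsClopen (Ew k) := fun k => hKclo' _
  have hEmem : ∀ k, e k ∈ E k := fun k => hdK' _
  have hEwmem : ∀ k, w k ∈ Ew k := fun k => hdK' _
  have hEdisj : ∀ m n, m ≠ n → Disjoint (E m) (E n) :=
    fun m n h => hKdisj' _ _ (by omega)
  have hEwdisj : ∀ m n, m ≠ n → Disjoint (Ew m) (Ew n) :=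
    fun m n h => hKdisj' _ _ (by omega)
  have hEEw : ∀ m n, Disjoint (E m) (Ew n) := fun m n => hKdisj' _ _ (by omega)
  have heinj : Function.Injective e := fun m n h => by
    have := hdinj' h; omega
  obtain ⟨x, hxr, hxcl⟩ := range_not_closed hcc hEclo hEmem hEdisj
  obtain ⟨p, hpfree, hptend⟩ := build_p hEclo hEmem hEdisj hxr hxcl
  -- second anchor
  obtain ⟨xw, hxwtend⟩ := swap_lemma hX p hptend hEclo hEmem hEdisj
    (B := Set.univ) univ_mem (L := Ew) (fun k _ => hEwclo k) (fun k _ => hEwmem k)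
    (fun k _ j _ hkj => hEwdisj k j hkj) (fun k j _ => hEEw k j)
  set Pe : Set X := closure (⋃ n, E n) with hPe
  have hPeclo : IsClopen Pe :=
    ⟨isClosed_closure, ExtremallyDisconnected.open_closure _
      (isOpen_iUnion fun n => (hEclo n).2)⟩
  have hEsubPe : ∀ k, E k ⊆ Pe := fun k =>
    subset_trans (subset_iUnion (fun n => E n) k) subset_closure
  have hEwPe : ∀ k, Disjoint (Ew k) Pe := by
    intro k
    have hdisj : Disjoint (⋃ n, E n) (Ew k) := by
      rw [Set.disjoint_left]
      intro s hs hs'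
      obtain ⟨n, hn⟩ := mem_iUnion.1 hs
      exact Set.disjoint_left.1 (hEEw n k) hn hs'
    exact (disj_closure_left (hEwclo k).2 hdisj).symm
  refine ⟨p, hpfree, ?_⟩
  rintro y B hB hyinj ⟨Λ, hΛ1, hΛ2⟩
  by_cases hT : B ∩ {k | y k ∈ Pe} ∈ p
  · -- anchor at the odd system
    refine swap_lemma hX p hxwtend hEwclo hEwmem hEwdisj (B := B ∩ {k | y k ∈ Pe}) hT
      (L := fun k => Λ (y k) ∩ Pe) ?_ ?_ ?_ ?_
    · intro k hk
      exact (hΛ1 _ (mem_image_of_mem y hk.1)).1.inter hPeclo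
    · intro k hk
      exact ⟨(hΛ1 _ (mem_image_of_mem y hk.1)).2, hk.2⟩
    · intro k hk j hj hkj
      have hyne : y k ≠ y j := fun h => hkj (hyinj hk.1 hj.1 h)
      exact ((hΛ2 _ (mem_image_of_mem y hk.1) _ (mem_image_of_mem y hj.1) hyne).mono
        inter_subset_left inter_subset_left)
    · intro k j hj
      exact ((hEwPe k).mono_right inter_subset_right)
  · have hT' : B ∩ {k | y k ∈ Pe}ᶜ ∈ p := by
      have h1 : B ∩ {k | y k ∈ Pe}ᶜ = B \ (B ∩ {k | y k ∈ Pe}) := by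
        ext k; simp only [mem_inter_iff, mem_compl_iff, mem_diff, mem_setOf_eq]; tauto
      rw [h1]
      exact Filter.diff_mem hB (Ultrafilter.compl_mem_iff_notMem.2 hT)
    refine swap_lemma hX p hptend hEclo hEmem hEdisj (B := B ∩ {k | y k ∈ Pe}ᶜ) hT'
      (L := fun k => Λ (y k) \ Pe) ?_ ?_ ?_ ?_
    · intro k hk
      exact (hΛ1 _ (mem_image_of_mem y hk.1)).1.diff hPeclo
    · intro k hk
      exact ⟨(hΛ1 _ (mem_image_of_mem y hk.1)).2, hk.2⟩
    · intro k hk j hj hkj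
      have hyne : y k ≠ y j := fun h => hkj (hyinj hk.1 hj.1 h)
      exact ((hΛ2 _ (mem_image_of_mem y hk.1) _ (mem_image_of_mem y hj.1) hyne).mono
        diff_subset diff_subset)
    · intro k j hj
      refine Set.disjoint_left.2 fun s hs hs' => hs'.2 (hEsubPe k hs)


lemma refine_one {A : Set ℕ} (hA : A.Infinite) (g : ℕ → X) :
    ∃ A' : Set ℕ, A' ⊆ A ∧ A'.Infinite ∧
      ((∃ v, ∀ m ∈ A', g m = v) ∨
       (Set.InjOn g A' ∧ ∃ Λ : X → Set X, (∀ v ∈ g '' A', IsClopen (Λ v) ∧ v ∈ Λ v) ∧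
         (∀ v ∈ g '' A', ∀ w ∈ g '' A', v ≠ w → Disjoint (Λ v) (Λ w)))) := by
  classical
  by_cases hfib : ∃ v, (A ∩ g ⁻¹' {v}).Infinite
  · obtain ⟨v, hv⟩ := hfib
    exact ⟨A ∩ g ⁻¹' {v}, inter_subset_left, hv, Or.inl ⟨v, fun m hm => hm.2⟩⟩
  · push_neg at hfib
    have himg : (g '' A).Infinite := by
      intro hfin
      have hsub : A ⊆ ⋃ v ∈ g '' A, (A ∩ g ⁻¹' {v}) := by
        intro m hm
        exact mem_biUnion (mem_image_of_mem g hm) ⟨hm, rfl⟩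
      exact hA ((hfin.biUnion (fun v _ => hfib v)).subset hsub)
    obtain ⟨D, Λ, hDsub, hDinf, hΛ1, hΛ2⟩ := exists_sdiscrete_set himg
    have hchoice : ∀ v, v ∈ D → ∃ m, m ∈ A ∧ g m = v := by
      intro v hv
      obtain ⟨m, hm, rfl⟩ := hDsub hv
      exact ⟨m, hm, rfl⟩
    choose! idx hidxA hidxg using hchoice
    have hidxinj : Set.InjOn idx D := by
      intro v hv v' hv' h
      rw [← hidxg v hv, ← hidxg v' hv', h]
    refine ⟨idx '' D, ?_, hDinf.image hidxinj, Or.inr ⟨?_, ?_⟩⟩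
    · rintro m ⟨v, hv, rfl⟩
      exact hidxA v hv
    · rintro m ⟨v, hv, rfl⟩ m' ⟨v', hv', rfl⟩ h
      rw [hidxg v hv, hidxg v' hv'] at h
      rw [h]
    · have himgeq : g '' (idx '' D) = D := by
        ext t
        constructor
        · rintro ⟨m, ⟨v, hv, rfl⟩, rfl⟩
          rwa [hidxg v hv]
        · intro ht
          exact ⟨idx t, mem_image_of_mem idx ht, hidxg t ht⟩
      rw [himgeq]
      exact ⟨Λ, hΛ1, hΛ2⟩


end XSec

end Stmt17

/-- The countable power of a countably compact maximally homogeneous extremally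
disconnected space is countably compact. -/
theorem stmt_17 {X : Type*} [TopologicalSpace X] [T2Space X] [CompletelyRegularSpace X]
    [ExtremallyDisconnected X] (hX : MaximallyHomogeneous X) (hcc : CountablyCompact X) :
    CountablyCompact (ℕ → X) := by
  classical
  rcases finite_or_infinite X with hfin | hinf
  · intro U hU hcover
    obtain ⟨t, hsub⟩ := isCompact_univ.elim_finite_subcover U hU (by rw [hcover])
    exact ⟨t, eq_univ_of_univ_subset hsub⟩
  · obtain ⟨p, hpfree, hplim⟩ := Stmt17.main_p_limit hX hcc hinf
    have hcof : ∀ k : ℕ, {m | k ≤ m} ∈ p := by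
      intro k
      by_contra hk
      have h1 : {m | k ≤ m}ᶜ ∈ p := Ultrafilter.compl_mem_iff_notMem.2 hk
      have h2 : {m : ℕ | k ≤ m}ᶜ ⊆ Finset.range k := by
        intro m hm
        simp only [mem_compl_iff, mem_setOf_eq, not_le] at hm
        simpa using hm
      exact hpfree _ ((Finset.range k).finite_toSet.subset h2) h1
    intro U hU hcover
    by_contra hnofin
    push_neg at hnofin
    have hpts : ∀ n : ℕ, ∃ Pt : ℕ → X, Pt ∉ ⋃ i ∈ Finset.range (n + 1), U i := by
      intro n
      rcases ne_univ_iff_exists_notMem _ |>.1 (hnofin (Finset.range (n + 1))) with ⟨Pt, hPt⟩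
      exact ⟨Pt, hPt⟩
    choose P hP using hpts
    -- refinement chain
    have hstep : ∀ (k : ℕ) (S : Set ℕ), S.Infinite → ∃ S' : Set ℕ, S' ⊆ S ∧ S'.Infinite ∧
        ((∃ v, ∀ m ∈ S', P m k = v) ∨
         (Set.InjOn (fun m => P m k) S' ∧ ∃ Λ : X → Set X,
           (∀ v ∈ (fun m => P m k) '' S', IsClopen (Λ v) ∧ v ∈ Λ v) ∧
           (∀ v ∈ (fun m => P m k) '' S', ∀ w ∈ (fun m => P m k) '' S', v ≠ w →
             Disjoint (Λ v) (Λ w)))) :=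
      fun k S hS => Stmt17.refine_one hS (fun m => P m k)
    choose step hsub hinf2 hQ using hstep
    let AA : ℕ → {s : Set ℕ // s.Infinite} := fun k =>
      Nat.rec ⟨Set.univ, Set.infinite_univ⟩
        (fun k prev => ⟨step k prev.1 prev.2, hinf2 k prev.1 prev.2⟩) k
    have hAAsucc : ∀ k, (AA (k + 1)).1 = step k (AA k).1 (AA k).2 := fun k => rfl
    have hAAmono : ∀ m n, m ≤ n → (AA n).1 ⊆ (AA m).1 := by
      intro m n h
      induction n with
      | zero => simp_all
      | succ j ih =>
        rcases Nat.lt_or_ge m (j + 1) with h' | h'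
        · refine subset_trans ?_ (ih (Nat.lt_succ_iff.1 h'))
          rw [hAAsucc j]
          exact hsub j (AA j).1 (AA j).2
        · have : m = j + 1 := le_antisymm h h'
          subst this; exact subset_rfl
    -- diagonal sequence
    let a : ℕ → ℕ := fun m =>
      Nat.rec (((AA 0).2.exists_gt 0).choose)
        (fun m prev => (((AA (m + 1)).2.exists_gt prev).choose)) m
    have ha0 : a 0 ∈ (AA 0).1 := ((AA 0).2.exists_gt 0).choose_spec.1
    have hasucc : ∀ m, a (m + 1) ∈ (AA (m + 1)).1 ∧ a m < a (m + 1) := by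
      intro m
      exact ⟨(((AA (m + 1)).2.exists_gt (a m)).choose_spec).1,
        (((AA (m + 1)).2.exists_gt (a m)).choose_spec).2⟩
    have hamem : ∀ m, a m ∈ (AA m).1 := by
      intro m
      cases m with
      | zero => exact ha0
      | succ j => exact (hasucc j).1
    have hamono : StrictMono a := strictMono_nat_of_lt_succ (fun m => (hasucc m).2)
    have hage : ∀ m, m ≤ a m := fun m => hamono.le_apply
    -- coordinatewise limits
    have hlim : ∀ k, ∃ l, Tendsto (fun m => P (a m) k) (p : Filter ℕ) (𝓝 l) := by
      intro k
      have hBk : {m | k + 1 ≤ m} ∈ p := hcof (k + 1)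
      have hmem' : ∀ m, k + 1 ≤ m → a m ∈ (AA (k + 1)).1 :=
        fun m hm => hAAmono (k + 1) m hm (hamem m)
      rcases hQ k (AA k).1 (AA k).2 with ⟨v, hv⟩ | ⟨hinj, Λ, hΛ1, hΛ2⟩
      · refine ⟨v, ?_⟩
        refine Tendsto.congr' ?_ (tendsto_const_nhds : Tendsto (fun _ : ℕ => v) (p : Filter ℕ) (𝓝 v))
        filter_upwards [hBk] with m hm
        exact (hv (a m) (by rw [← hAAsucc k] at *; exact hmem' m hm)).symm
      · have hinj' : Set.InjOn (fun m => P (a m) k) {m | k + 1 ≤ m} := by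
          intro m hm m' hm' h
          have := hinj (by rw [← hAAsucc k] at *; exact hmem' m hm)
            (by rw [← hAAsucc k] at *; exact hmem' m' hm') h
          exact hamono.injective this
        have hsubimg : (fun m => P (a m) k) '' {m | k + 1 ≤ m} ⊆
            (fun m => P m k) '' (step k (AA k).1 (AA k).2) := by
          rintro t ⟨m, hm, rfl⟩
          exact ⟨a m, by rw [← hAAsucc k] at *; exact hmem' m hm, rfl⟩
        refine hplim _ _ hBk hinj' ⟨Λ, ?_, ?_⟩
        · exact fun v hv => hΛ1 v (hsubimg hv)
        · exact fun v hv w hw hvw => hΛ2 v (hsubimg hv) w (hsubimg hw) hvw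
    choose l hl using hlim
    have htend : Tendsto (fun m => P (a m)) (p : Filter ℕ) (𝓝 l) := tendsto_pi_nhds.2 hl
    have hlU : l ∈ ⋃ n, U n := by rw [hcover]; trivial
    obtain ⟨i0, hi0⟩ := mem_iUnion.1 hlU
    have hev : {m | P (a m) ∈ U i0} ∈ p := htend ((hU i0).mem_nhds hi0)
    obtain ⟨m, hm1, hm2⟩ := Filter.nonempty_of_mem (Filter.inter_mem hev (hcof i0))
    refine (hP (a m)) (Set.mem_biUnion (show i0 ∈ Finset.range (a m + 1) from ?_) hm1)
    exact Finset.mem_range.2 (Nat.lt_succ_of_le (le_trans hm2 (hage m)))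
end
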